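/- arXiv:1605.09360 — 7 statements merged into one kernel-verified Lean document; each statement's English description precedes it below -/
import Mathlib

section
/- Let F be a number field with adele ring A, and let t ∈ A^× be an idele. Then the number of nonzero field elements x ∈ F^× satisfying |x|_v ≤ |t_v|_v for all places v is at most C·|t|_A, where |t|_A is the idelic module and C is a constant depending only on F. -/
open NumberField IsDedekindDomain

set_option maxHeartbeats 1000000

open Multiplicative

theorem normIneq (F : Type*) [Field F] [NumberField F]
    (S : Finset (HeightOneSpectrum (𝓞 F))) (e : HeightOneSpectrum (𝓞 F) → ℤ)
    (he : ∀ v ∉ S, e v = 0) (x : F) (hx : x ≠ 0)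
    (hval : ∀ v : HeightOneSpectrum (𝓞 F),
      v.valuation F x ≤ ((Multiplicative.ofAdd (-(e v)) : Multiplicative ℤ) :
        WithZero (Multiplicative ℤ))) :
    (∏ v ∈ S, (Ideal.absNorm v.asIdeal : ℝ) ^ (e v)) ≤
      ∏ w : InfinitePlace F, (w x) ^ w.mult := by
  obtain ⟨a, b, hbmem, hab⟩ := IsFractionRing.div_surjective (A := 𝓞 F) x
  have hb : b ≠ 0 := nonZeroDivisors.ne_zero hbmem
  have hbF : (algebraMap (𝓞 F) F b) ≠ 0 := by
    simpa using (map_ne_zero_iff _ (IsFractionRing.injective (𝓞 F) F)).2 hb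
  have ha : a ≠ 0 := by
    rintro rfl; apply hx; rw [← hab]; simp
  have hspa : Ideal.span {a} ≠ (0 : Ideal (𝓞 F)) := by
    simpa [Ideal.span_singleton_eq_bot] using ha
  have hspb : Ideal.span {b} ≠ (0 : Ideal (𝓞 F)) := by
    simpa [Ideal.span_singleton_eq_bot] using hb
  classical
  set T : Finset (HeightOneSpectrum (𝓞 F)) :=
    S ∪ (Ideal.finite_factors hspb).toFinset with hT
  have hST : S ⊆ T := Finset.subset_union_left
  set m : HeightOneSpectrum (𝓞 F) → ℕ :=
    fun v => (Associates.mk v.asIdeal).count (Associates.mk (Ideal.span {b})).factors with hm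
  have hmT : ∀ v ∉ T, m v = 0 := by
    intro v hv
    have : ¬ v.asIdeal ∣ Ideal.span {b} := by
      intro hdvd
      exact hv (Finset.mem_union_right _ (by simpa using hdvd))
    rw [hm]
    by_contra hne
    exact this ((Associates.count_ne_zero_iff_dvd hspb v.irreducible).1 hne)
  -- valuation of b
  have hvb : ∀ v : HeightOneSpectrum (𝓞 F),
      v.valuation F ((algebraMap (𝓞 F) F) b) =
        ((Multiplicative.ofAdd (-(m v : ℤ)) : Multiplicative ℤ) : WithZero (Multiplicative ℤ)) := by
    intro v
    rw [show ((algebraMap (𝓞 F) F) b) = ((b : F)) from rfl,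
      v.valuation_of_algebraMap b]
    exact v.intValuation_if_neg hb
  -- valuation of a
  have hva : ∀ v : HeightOneSpectrum (𝓞 F),
      v.intValuationDef a ≤
        ((Multiplicative.ofAdd (-(e v + (m v : ℤ))) : Multiplicative ℤ) :
          WithZero (Multiplicative ℤ)) := by
    intro v
    have h1 : v.valuation F ((algebraMap (𝓞 F) F) a) =
        v.valuation F x * v.valuation F ((algebraMap (𝓞 F) F) b) := by
      rw [show (algebraMap (𝓞 F) F) a = x * (algebraMap (𝓞 F) F) b by
        rw [← hab, div_mul_cancel₀ _ hbF], map_mul]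
    rw [← HeightOneSpectrum.intValuation_apply, ← HeightOneSpectrum.valuation_of_algebraMap (K := F) v a, h1, hvb v]
    calc v.valuation F x * ((Multiplicative.ofAdd (-(m v : ℤ)) : Multiplicative ℤ) :
          WithZero (Multiplicative ℤ))
        ≤ ((Multiplicative.ofAdd (-(e v)) : Multiplicative ℤ) : WithZero (Multiplicative ℤ)) *
          ((Multiplicative.ofAdd (-(m v : ℤ)) : Multiplicative ℤ) :
            WithZero (Multiplicative ℤ)) := mul_le_mul_left (hval v) _
      _ = _ := by
          rw [← WithZero.coe_mul, ← ofAdd_add]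
          congr 2
          ring
  -- exponents for a
  set k : HeightOneSpectrum (𝓞 F) → ℕ := fun v => (e v + (m v : ℤ)).toNat with hk
  have hek : ∀ v, e v ≤ (k v : ℤ) - (m v : ℤ) := by
    intro v
    simp only [hk]
    omega
  have hdvd : ∀ v : HeightOneSpectrum (𝓞 F), v.asIdeal ^ (k v) ∣ Ideal.span {a} := by
    intro v
    rcases le_or_gt (e v + (m v : ℤ)) 0 with h0 | h0
    · have hk0 : k v = 0 := by rw [hk]; simpa using Int.toNat_eq_zero.2 h0
      simp [hk0]
    · rw [← HeightOneSpectrum.intValuation_le_pow_iff_dvd]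
      have hkv : ((k v : ℤ)) = e v + (m v : ℤ) := Int.toNat_of_nonneg h0.le
      rw [hkv]
      exact hva v
  have hcop : (↑T : Set (HeightOneSpectrum (𝓞 F))).Pairwise
      (Function.onFun IsCoprime fun v => v.asIdeal ^ k v) := by
    intro v _ v' _ hne
    exact (Ideal.isCoprime_iff_sup_eq.2
      ((v.isPrime.isMaximal v.ne_bot).coprime_of_ne (v'.isPrime.isMaximal v'.ne_bot)
        (fun h => hne (HeightOneSpectrum.ext h)))).pow
  have hJdvd : (∏ v ∈ T, v.asIdeal ^ k v) ∣ Ideal.span {a} :=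
    Finset.prod_dvd_of_coprime hcop (fun v _ => hdvd v)
  have hApos : 0 < Ideal.absNorm (Ideal.span {a}) :=
    Nat.pos_of_ne_zero (fun h => hspa (Ideal.absNorm_eq_zero_iff.1 h))
  have hBpos : 0 < Ideal.absNorm (Ideal.span {b}) :=
    Nat.pos_of_ne_zero (fun h => hspb (Ideal.absNorm_eq_zero_iff.1 h))
  have hAle : (∏ v ∈ T, (Ideal.absNorm v.asIdeal) ^ (k v)) ≤ Ideal.absNorm (Ideal.span {a}) := by
    apply Nat.le_of_dvd hApos
    have := map_dvd Ideal.absNorm hJdvd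
    simpa [map_prod, map_pow] using this
  have hBfact : Ideal.absNorm (Ideal.span {b}) = ∏ v ∈ T, (Ideal.absNorm v.asIdeal) ^ (m v) := by
    conv_lhs => rw [← Ideal.finprod_heightOneSpectrum_factorization hspb]
    rw [finprod_eq_prod_of_mulSupport_subset _
      (s := T) ?_, map_prod]
    · exact Finset.prod_congr rfl (fun v _ => by
        rw [HeightOneSpectrum.maxPowDividing, map_pow])
    · intro v hv
      by_contra hvT
      apply hv
      simp only [Function.mem_mulSupport, not_not, HeightOneSpectrum.maxPowDividing]
      rw [show (Associates.mk v.asIdeal).count (Associates.mk (Ideal.span {b})).factors = m v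
        from rfl, hmT v hvT, pow_zero]
  -- positivity of norms of primes
  have hN1 : ∀ v : HeightOneSpectrum (𝓞 F), (1 : ℝ) ≤ (Ideal.absNorm v.asIdeal : ℝ) := by
    intro v
    have : Ideal.absNorm v.asIdeal ≠ 0 := fun h => v.ne_bot (Ideal.absNorm_eq_zero_iff.1 h)
    exact_mod_cast Nat.one_le_iff_ne_zero.2 this
  have hN0 : ∀ v : HeightOneSpectrum (𝓞 F), (Ideal.absNorm v.asIdeal : ℝ) ≠ 0 :=
    fun v => by linarith [hN1 v]
  -- rewrite RHS as A/B
  have hxa : (algebraMap (𝓞 F) F) a = x * (algebraMap (𝓞 F) F) b := by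
    rw [← hab, div_mul_cancel₀ _ hbF]
  have hnormx : ∏ w : InfinitePlace F, (w x) ^ w.mult =
      (Ideal.absNorm (Ideal.span {a}) : ℝ) / (Ideal.absNorm (Ideal.span {b}) : ℝ) := by
    have hna : |Algebra.norm ℚ ((algebraMap (𝓞 F) F) a)| = (Ideal.absNorm (Ideal.span {a}) : ℚ) := by
      rw [show (algebraMap (𝓞 F) F) a = ((a : F)) from rfl, ← Algebra.coe_norm_int,
        Ideal.absNorm_span_singleton]
      rw [Nat.cast_natAbs, Int.cast_abs]
    have hnb : |Algebra.norm ℚ ((algebraMap (𝓞 F) F) b)| = (Ideal.absNorm (Ideal.span {b}) : ℚ) := by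
      rw [show (algebraMap (𝓞 F) F) b = ((b : F)) from rfl, ← Algebra.coe_norm_int,
        Ideal.absNorm_span_singleton]
      rw [Nat.cast_natAbs, Int.cast_abs]
    have hmul : |Algebra.norm ℚ ((algebraMap (𝓞 F) F) a)| =
        |Algebra.norm ℚ x| * |Algebra.norm ℚ ((algebraMap (𝓞 F) F) b)| := by
      rw [hxa, map_mul, abs_mul]
    rw [InfinitePlace.prod_eq_abs_norm]
    rw [hna, hnb] at hmul
    have hBQ : (0:ℚ) < (Ideal.absNorm (Ideal.span {b}) : ℚ) := by exact_mod_cast hBpos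
    have : |Algebra.norm ℚ x| = (Ideal.absNorm (Ideal.span {a}) : ℚ) /
        (Ideal.absNorm (Ideal.span {b}) : ℚ) := by
      rw [eq_div_iff hBQ.ne']
      linarith [hmul]
    rw [this]
    push_cast
    ring
  rw [hnormx]
  -- LHS over T
  have hLT : (∏ v ∈ S, (Ideal.absNorm v.asIdeal : ℝ) ^ (e v)) =
      ∏ v ∈ T, (Ideal.absNorm v.asIdeal : ℝ) ^ (e v) := by
    apply Finset.prod_subset hST
    intro v _ hvS
    rw [he v hvS, zpow_zero]
  rw [hLT]
  calc ∏ v ∈ T, (Ideal.absNorm v.asIdeal : ℝ) ^ (e v)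
      ≤ ∏ v ∈ T, (Ideal.absNorm v.asIdeal : ℝ) ^ ((k v : ℤ) - (m v : ℤ)) := by
        apply Finset.prod_le_prod
        · intro v _; positivity
        · intro v _
          exact zpow_le_zpow_right₀ (hN1 v) (hek v)
    _ = (∏ v ∈ T, (Ideal.absNorm v.asIdeal : ℝ) ^ (k v)) /
        (∏ v ∈ T, (Ideal.absNorm v.asIdeal : ℝ) ^ (m v)) := by
        rw [← Finset.prod_div_distrib]
        exact Finset.prod_congr rfl (fun v _ => by
          rw [zpow_sub₀ (hN0 v), zpow_natCast, zpow_natCast])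
    _ ≤ (Ideal.absNorm (Ideal.span {a}) : ℝ) / (Ideal.absNorm (Ideal.span {b}) : ℝ) := by
        rw [hBfact]
        push_cast
        have hd : (0:ℝ) < ∏ v ∈ T, (Ideal.absNorm v.asIdeal : ℝ) ^ (m v) :=
          Finset.prod_pos (fun v _ => pow_pos (lt_of_lt_of_le zero_lt_one (hN1 v)) _)
        rw [div_le_div_iff_of_pos_right hd]
        exact_mod_cast hAle

lemma floor_aux {a b s : ℝ} (hs : 0 < s) (h : ⌊a/s⌋ = ⌊b/s⌋) : |a - b| < s := by
  have h1 := Int.floor_le (a/s)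
  have h2 := Int.lt_floor_add_one (a/s)
  have h3 := Int.floor_le (b/s)
  have h4 := Int.lt_floor_add_one (b/s)
  rw [h] at h1 h2
  have ha : a = (a/s)*s := (div_mul_cancel₀ a hs.ne').symm
  have hb : b = (b/s)*s := (div_mul_cancel₀ b hs.ne').symm
  rw [abs_sub_lt_iff]
  constructor <;> nlinarith [h1, h2, h3, h4, hs]

/-- (Adelic counting, Lemma 6(a).) Let `F` be a number field. An idele
`t ∈ 𝔸ˣ` is described by its local modules: positive real numbers `(y w)^(mult w)` at the
infinite places `w`, and integers `e v` (the valuations of `t`), zero outside a finite set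
`S`, at the finite places `v`; its idelic module is
`|t|_𝔸 = ∏_w (y w)^(mult w) · ∏_{v ∈ S} (N v)^(-e v)`.
The number of `x ∈ F^×` with `|x|_v ≤ |t_v|_v` at every place `v` is `≪_F |t|_𝔸`. -/
theorem card_field_elements_le_module (F : Type*) [Field F] [NumberField F] :
    ∃ C : ℝ, 0 < C ∧
      ∀ (y : InfinitePlace F → ℝ), (∀ w, 0 < y w) →
      ∀ (S : Finset (HeightOneSpectrum (𝓞 F))) (e : HeightOneSpectrum (𝓞 F) → ℤ),
        (∀ v ∉ S, e v = 0) →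
        (Nat.card {x : F // x ≠ 0 ∧
            (∀ w : InfinitePlace F, (w x) ^ w.mult ≤ (y w) ^ w.mult) ∧
            (∀ v : HeightOneSpectrum (𝓞 F),
              v.valuation F x ≤ ((Multiplicative.ofAdd (-(e v)) : Multiplicative ℤ) :
                WithZero (Multiplicative ℤ)))} : ℝ) ≤
          C * (∏ w : InfinitePlace F, (y w) ^ w.mult) *
            ∏ v ∈ S, (Ideal.absNorm v.asIdeal : ℝ) ^ (-(e v)) := by
  classical
  set n := Module.finrank ℚ F with hn
  have hn1 : 1 ≤ n := Module.finrank_pos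
  refine ⟨(12:ℝ)^n, by positivity, ?_⟩
  intro y hy S e he
  have hN1 : ∀ v : HeightOneSpectrum (𝓞 F), (1 : ℝ) ≤ (Ideal.absNorm v.asIdeal : ℝ) := by
    intro v
    have : Ideal.absNorm v.asIdeal ≠ 0 := fun h => v.ne_bot (Ideal.absNorm_eq_zero_iff.1 h)
    exact_mod_cast Nat.one_le_iff_ne_zero.2 this
  set P : ℝ := ∏ v ∈ S, (Ideal.absNorm v.asIdeal : ℝ) ^ (e v) with hP
  set Y : ℝ := ∏ w : InfinitePlace F, (y w) ^ w.mult with hY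
  have hPpos : 0 < P :=
    Finset.prod_pos (fun v _ => zpow_pos (lt_of_lt_of_le zero_lt_one (hN1 v)) _)
  have hYpos : 0 < Y := Finset.prod_pos (fun w _ => pow_pos (hy w) _)
  have hRHS : (∏ v ∈ S, (Ideal.absNorm v.asIdeal : ℝ) ^ (-(e v))) = P⁻¹ := by
    rw [hP, ← Finset.prod_inv_distrib]
    exact Finset.prod_congr rfl (fun v _ => by rw [zpow_neg])
  rw [hRHS]
  set T := {x : F // x ≠ 0 ∧
      (∀ w : InfinitePlace F, (w x) ^ w.mult ≤ (y w) ^ w.mult) ∧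
      (∀ v : HeightOneSpectrum (𝓞 F),
        v.valuation F x ≤ ((Multiplicative.ofAdd (-(e v)) : Multiplicative ℤ) :
          WithZero (Multiplicative ℤ)))} with hT
  by_cases hne : Nonempty T
  swap
  · have : Nat.card T = 0 := by
      rw [Nat.card_eq_zero]; exact Or.inl (not_nonempty_iff.1 hne)
    rw [this]
    push_cast
    positivity
  -- the set is nonempty, so P ≤ Y
  obtain ⟨⟨x₀, hx₀, hx₀w, hx₀v⟩⟩ := hne
  have hPY : P ≤ Y := by
    refine le_trans (normIneq F S e he x₀ hx₀ hx₀v) ?_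
    exact Finset.prod_le_prod (fun w _ => pow_nonneg (w.1.nonneg x₀) _)
      (fun w _ => hx₀w w)
  -- the mesh size
  set τ : ℝ := (P / Y) ^ ((n:ℝ)⁻¹) / 4 with hτ
  have hτpos : 0 < τ := by
    apply div_pos _ (by norm_num)
    exact Real.rpow_pos_of_pos (div_pos hPpos hYpos) _
  have hτ4 : τ ≤ 1/4 := by
    rw [hτ]
    have : (P / Y) ^ ((n:ℝ)⁻¹) ≤ 1 :=
      Real.rpow_le_one (div_pos hPpos hYpos).le (div_le_one_of_le₀ hPY hYpos.le)
        (by positivity)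
    linarith
  have hτn : (4 * τ) ^ n = P / Y := by
    rw [hτ, mul_div_cancel₀ _ (by norm_num : (4:ℝ) ≠ 0)]
    exact Real.rpow_inv_natCast_pow (div_pos hPpos hYpos).le (by omega)
  -- bounds on w x for x ∈ T
  have hwx : ∀ (x : T) (w : InfinitePlace F), w (x : F) ≤ y w := by
    rintro ⟨x, -, hxw, -⟩ w
    exact (pow_le_pow_iff_left₀ (w.1.nonneg x) (hy w).le
      InfinitePlace.mult_ne_zero).1 (hxw w)
  -- the cell map
  set Φ : T → (InfinitePlace F → ℤ × ℤ) := fun x w =>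
    (⌊(w.embedding (x : F)).re / (τ * y w)⌋, ⌊(w.embedding (x : F)).im / (τ * y w)⌋) with hΦ
  -- injectivity
  have hinj : Function.Injective Φ := by
    intro x x' hxx
    by_contra hnexx
    have hδ : (x : F) - (x' : F) ≠ 0 := by
      intro h
      exact hnexx (Subtype.ext (sub_eq_zero.1 h))
    set δ : F := (x : F) - (x' : F) with hδdef
    have hδval : ∀ v : HeightOneSpectrum (𝓞 F),
        v.valuation F δ ≤ ((Multiplicative.ofAdd (-(e v)) : Multiplicative ℤ) :
          WithZero (Multiplicative ℤ)) := by
      intro v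
      exact le_trans (Valuation.map_sub _ _ _) (max_le (x.2.2.2 v) (x'.2.2.2 v))
    have hlow : P ≤ ∏ w : InfinitePlace F, (w δ) ^ w.mult := normIneq F S e he δ hδ hδval
    have hcell : ∀ w : InfinitePlace F, w δ ≤ 2 * τ * y w := by
      intro w
      have hs : 0 < τ * y w := mul_pos hτpos (hy w)
      have h1 : Φ x w = Φ x' w := congr_fun hxx w
      have hre : |(w.embedding (x : F)).re - (w.embedding (x' : F)).re| < τ * y w :=
        floor_aux hs (congrArg Prod.fst h1)
      have him : |(w.embedding (x : F)).im - (w.embedding (x' : F)).im| < τ * y w :=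
        floor_aux hs (congrArg Prod.snd h1)
      have hemb : w.embedding δ = w.embedding (x : F) - w.embedding (x' : F) := map_sub _ _ _
      have h2 : w δ = ‖w.embedding δ‖ := (InfinitePlace.norm_embedding_eq w δ).symm
      rw [h2, hemb]
      calc ‖w.embedding (x : F) - w.embedding (x' : F)‖
          ≤ |(w.embedding (x : F) - w.embedding (x' : F)).re| +
            |(w.embedding (x : F) - w.embedding (x' : F)).im| :=
            Complex.norm_le_abs_re_add_abs_im _
        _ ≤ 2 * τ * y w := by
            simp only [Complex.sub_re, Complex.sub_im]
            linarith [hre, him]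
    have hup : ∏ w : InfinitePlace F, (w δ) ^ w.mult ≤ (2 * τ) ^ n * Y := by
      have h1 : ∏ w : InfinitePlace F, (w δ) ^ w.mult ≤
          ∏ w : InfinitePlace F, ((2 * τ) * y w) ^ w.mult := by
        refine Finset.prod_le_prod (fun w _ => pow_nonneg (w.1.nonneg δ) _) (fun w _ => ?_)
        refine pow_le_pow_left₀ (w.1.nonneg δ) ?_ _
        calc w δ ≤ 2 * τ * y w := hcell w
          _ = (2 * τ) * y w := by ring
      refine h1.trans_eq ?_
      calc ∏ w : InfinitePlace F, ((2*τ) * y w)^w.mult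
          = (∏ w : InfinitePlace F, (2*τ)^w.mult) * ∏ w : InfinitePlace F, (y w)^w.mult := by
            rw [← Finset.prod_mul_distrib]
            exact Finset.prod_congr rfl (fun w _ => (mul_pow _ _ _))
        _ = (2*τ)^n * Y := by rw [Finset.prod_pow_eq_pow_sum, InfinitePlace.sum_mult_eq, hn, hY]
    have h2n : (2:ℝ) ≤ 2 ^ n := by
      calc (2:ℝ) = 2^1 := (pow_one 2).symm
        _ ≤ 2^n := pow_le_pow_right₀ (by norm_num) hn1
    have hcontr : (2 * τ) ^ n * Y < P := by
      have h4 : (2*τ)^n * 2^n = (4*τ)^n := by rw [← mul_pow]; ring_nf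
      have h6 : ((2*τ)^n * 2^n) * Y = P := by
        rw [h4, hτn]; exact div_mul_cancel₀ P hYpos.ne'
      have h8 : (0:ℝ) < (2*τ)^n * Y := by positivity
      nlinarith [h6, h8, h2n]
    linarith [hlow.trans hup]
  -- now count cells
  set K : ℤ := ⌊1/τ⌋ with hK
  have hτ4' : (4:ℝ) ≤ 1/τ := by
    rw [le_div_iff₀ hτpos]; linarith
  have hK0 : (0:ℤ) ≤ K := Int.le_floor.2 (by push_cast; linarith)
  have hK1 : (K:ℝ) ≤ 1/τ := Int.floor_le _
  have hK2 : (1:ℝ)/τ < K + 1 := by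
    have := Int.lt_floor_add_one (1/τ); push_cast at this ⊢; linarith
  set B : InfinitePlace F → Finset (ℤ × ℤ) := fun w =>
    (Finset.Icc (-(K+1)) K) ×ˢ
      (if w.IsReal then ({0} : Finset ℤ) else Finset.Icc (-(K+1)) K) with hB
  have hfloor_mem : ∀ (t yw : ℝ), 0 < yw → |t| ≤ yw → ⌊t / (τ * yw)⌋ ∈ Finset.Icc (-(K+1)) K := by
    intro t yw hyw ht
    have hs : 0 < τ * yw := mul_pos hτpos hyw
    rw [Finset.mem_Icc]
    constructor
    · refine Int.le_floor.2 ?_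
      rw [le_div_iff₀ hs]
      push_cast
      rw [abs_le] at ht
      nlinarith [mul_lt_mul_of_pos_right hK2 hτpos, one_div_mul_cancel hτpos.ne', hyw, ht.1, ht.2]
    · have h1 : t / (τ * yw) ≤ 1/τ := by
        rw [div_le_div_iff₀ hs hτpos]
        rw [abs_le] at ht
        nlinarith [ht.1, ht.2, hτpos, hyw]
      calc ⌊t / (τ * yw)⌋ ≤ ⌊1/τ⌋ := Int.floor_le_floor h1
        _ = K := rfl
  have hmem : ∀ (x : T) (w : InfinitePlace F), Φ x w ∈ B w := by
    intro x w
    have hre : |(w.embedding (x : F)).re| ≤ y w :=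
      le_trans (by rw [← InfinitePlace.norm_embedding_eq w]; exact Complex.abs_re_le_norm _)
        (hwx x w)
    have him : |(w.embedding (x : F)).im| ≤ y w :=
      le_trans (by rw [← InfinitePlace.norm_embedding_eq w]; exact Complex.abs_im_le_norm _)
        (hwx x w)
    rw [hB]
    refine Finset.mem_product.2 ⟨hfloor_mem _ _ (hy w) hre, ?_⟩
    by_cases hwr : w.IsReal
    · have him0 : (w.embedding (x : F)).im = 0 := by
        have h1 := NumberField.InfinitePlace.isReal_iff.1 hwr
        rw [NumberField.ComplexEmbedding.isReal_iff] at h1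
        have h2 : (starRingEnd ℂ) (w.embedding (x : F)) = w.embedding (x : F) :=
          RingHom.congr_fun h1 (x : F)
        have h3 := Complex.conj_im (w.embedding (x : F))
        rw [h2] at h3
        linarith
      simp [hΦ, hwr, him0]
    · simp only [hwr, if_false]
      exact hfloor_mem _ _ (hy w) him
  set f : T → ((w : InfinitePlace F) → {p : ℤ × ℤ // p ∈ B w}) :=
    fun x w => ⟨Φ x w, hmem x w⟩ with hf
  have hfinj : Function.Injective f := by
    intro x x' h
    apply hinj
    funext w
    exact congrArg Subtype.val (congr_fun h w)
  have hcard1 : Nat.card T ≤ ∏ w : InfinitePlace F, (B w).card := by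
    calc Nat.card T ≤ Nat.card ((w : InfinitePlace F) → {p : ℤ × ℤ // p ∈ B w}) :=
          Nat.card_le_card_of_injective f hfinj
      _ = ∏ w : InfinitePlace F, Nat.card {p : ℤ × ℤ // p ∈ B w} := Nat.card_pi
      _ = ∏ w : InfinitePlace F, (B w).card := by
          exact Finset.prod_congr rfl (fun w _ => Nat.card_eq_finsetCard _)
  set M : ℕ := (2*K+2).toNat with hM
  have hIcc : (Finset.Icc (-(K+1)) K).card = M := by
    rw [Int.card_Icc, hM]
    congr 1
    ring
  have hBcard : ∀ w : InfinitePlace F, (B w).card ≤ M ^ w.mult := by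
    intro w
    rw [hB]
    simp only [Finset.card_product]
    by_cases hwr : w.IsReal
    · simp only [hwr, if_true, Finset.card_singleton, mul_one, hIcc]
      rw [InfinitePlace.mult, if_pos hwr, pow_one]
    · simp only [hwr, if_false, hIcc]
      rw [InfinitePlace.mult, if_neg hwr, sq]
  have hcard2 : Nat.card T ≤ M ^ n := by
    refine hcard1.trans ?_
    calc ∏ w : InfinitePlace F, (B w).card ≤ ∏ w : InfinitePlace F, M ^ w.mult :=
          Finset.prod_le_prod' (fun w _ => hBcard w)
      _ = M ^ n := by rw [Finset.prod_pow_eq_pow_sum, InfinitePlace.sum_mult_eq]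
  -- transfer to ℝ
  have hMR : (M : ℝ) ≤ 3 / τ := by
    have : (M:ℝ) = 2*(K:ℝ)+2 := by
      rw [hM]
      have : ((2*K+2).toNat : ℤ) = 2*K+2 := Int.toNat_of_nonneg (by omega)
      exact_mod_cast congrArg (Int.cast : ℤ → ℝ) this
    rw [this, div_eq_mul_inv]
    have hinv : (2:ℝ) ≤ τ⁻¹ := by
      rw [← one_div]; linarith
    have : (K:ℝ) ≤ τ⁻¹ := by rw [← one_div]; exact hK1
    linarith
  have hfin : ((M:ℝ)) ^ n ≤ 12 ^ n * Y * P⁻¹ := by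
    have h1 : ((M:ℝ)) ^ n ≤ (3/τ)^n := pow_le_pow_left₀ (by positivity) hMR n
    refine h1.trans_eq ?_
    have h5 : (4:ℝ)^n * τ^n = P/Y := by rw [← mul_pow]; exact hτn
    have hτn0 : (τ:ℝ)^n ≠ 0 := by positivity
    have hτval : τ^n * (Y * 4^n) = P := by
      field_simp at h5
      linarith
    rw [div_pow, ← hτval, show (12:ℝ) = 3*4 by norm_num, mul_pow]
    field_simp
  calc (Nat.card T : ℝ) ≤ ((M ^ n : ℕ) : ℝ) := by exact_mod_cast hcard2
    _ = ((M:ℝ))^n := by push_cast; ring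
    _ ≤ 12 ^ n * Y * P⁻¹ := hfin
end

section
/- Let F be a number field with r = r_1 + r_2 archimedean places. For every ε > 0 there is a constant C_ε depending only on F and ε such that for every idele t ∈ A^×, the number of x ∈ F^× satisfying |x|_v ≤ |t_v|_v for all archimedean v and |x|_v = |t_v|_v for all non-archimedean v is at most C_ε·|t|_A^ε. -/
open NumberField IsDedekindDomain

open scoped nonZeroDivisors Classical

set_option maxSynthPendingDepth 2
set_option maxHeartbeats 1000000

section AuxArith

variable {F : Type*} [Field F] [NumberField F]

private lemma aux_count_spanSingleton {x : F} (hx : x ≠ 0) (v : HeightOneSpectrum (𝓞 F)) {n : ℤ}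
    (hv : v.valuation F x = ((Multiplicative.ofAdd (-n) : Multiplicative ℤ) :
      WithZero (Multiplicative ℤ))) :
    FractionalIdeal.count F v (FractionalIdeal.spanSingleton (𝓞 F)⁰ x) = n := by
  obtain ⟨⟨a, d⟩, hxad⟩ := IsLocalization.mk'_surjective (𝓞 F)⁰ x
  dsimp only at hxad
  subst hxad
  have hd0 : (d : 𝓞 F) ≠ 0 := nonZeroDivisors.coe_ne_zero d
  have ha0 : a ≠ 0 := by
    rintro rfl
    exact hx (by simp)
  have hI : FractionalIdeal.spanSingleton (𝓞 F)⁰ (IsLocalization.mk' F a d) ≠ 0 := by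
    rw [ne_eq, FractionalIdeal.spanSingleton_eq_zero_iff]
    exact hx
  have hrep : FractionalIdeal.spanSingleton (𝓞 F)⁰ (IsLocalization.mk' F a d) =
      FractionalIdeal.spanSingleton (𝓞 F)⁰ ((algebraMap (𝓞 F) F (d : 𝓞 F))⁻¹) *
        ↑(Ideal.span {a} : Ideal (𝓞 F)) := by
    rw [FractionalIdeal.coeIdeal_span_singleton,
      FractionalIdeal.spanSingleton_mul_spanSingleton]
    congr 1
    rw [IsFractionRing.mk'_eq_div, div_eq_mul_inv, mul_comm]
  rw [FractionalIdeal.count_well_defined F v hI hrep]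
  rw [IsDedekindDomain.HeightOneSpectrum.valuation_of_mk'] at hv
  rw [IsDedekindDomain.HeightOneSpectrum.intValuation_apply,
    IsDedekindDomain.HeightOneSpectrum.intValuation_apply,
    v.intValuationDef_if_neg ha0, v.intValuationDef_if_neg hd0] at hv
  rw [← WithZero.exp_sub] at hv
  have := WithZero.exp_injective hv
  omega

private lemma aux_factor {x : F} (hx : x ≠ 0) (S : Finset (HeightOneSpectrum (𝓞 F)))
    (e : HeightOneSpectrum (𝓞 F) → ℤ) (he : ∀ v ∉ S, e v = 0)
    (hv : ∀ v : HeightOneSpectrum (𝓞 F), v.valuation F x =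
      ((Multiplicative.ofAdd (-(e v)) : Multiplicative ℤ) : WithZero (Multiplicative ℤ))) :
    FractionalIdeal.spanSingleton (𝓞 F)⁰ x =
      ∏ v ∈ S, (v.asIdeal : FractionalIdeal (𝓞 F)⁰ F) ^ (e v) := by
  have hI : FractionalIdeal.spanSingleton (𝓞 F)⁰ x ≠ 0 := by
    rw [ne_eq, FractionalIdeal.spanSingleton_eq_zero_iff]; exact hx
  rw [← FractionalIdeal.finprod_heightOneSpectrum_factorization' F hI]
  rw [finprod_congr (fun v => by rw [aux_count_spanSingleton hx v (hv v)])]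
  refine finprod_eq_prod_of_mulSupport_subset _ ?_
  intro v hvs
  rw [Function.mem_mulSupport] at hvs
  by_contra h
  exact hvs (by rw [he v h, zpow_zero])

private lemma aux_pf {x : F} (hx : x ≠ 0) (S : Finset (HeightOneSpectrum (𝓞 F)))
    (e : HeightOneSpectrum (𝓞 F) → ℤ) (he : ∀ v ∉ S, e v = 0)
    (hv : ∀ v : HeightOneSpectrum (𝓞 F), v.valuation F x =
      ((Multiplicative.ofAdd (-(e v)) : Multiplicative ℤ) : WithZero (Multiplicative ℤ))) :
    |Algebra.norm ℚ x| = ∏ v ∈ S, (Ideal.absNorm v.asIdeal : ℚ) ^ (e v) := by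
  have := congrArg FractionalIdeal.absNorm (aux_factor hx S e he hv)
  rw [FractionalIdeal.absNorm_span_singleton, map_prod] at this
  rw [this]
  refine Finset.prod_congr rfl fun v _ => ?_
  rw [map_zpow₀, FractionalIdeal.coeIdeal_absNorm]

private lemma aux_unit {x x0 : F} (hx : x ≠ 0) (hx0 : x0 ≠ 0)
    (hvv : ∀ v : HeightOneSpectrum (𝓞 F), v.valuation F x = v.valuation F x0) :
    ∃ m : (𝓞 F)ˣ, x = (algebraMap (𝓞 F) F m) * x0 := by
  classical
  have hI : FractionalIdeal.spanSingleton (𝓞 F)⁰ x0 = FractionalIdeal.spanSingleton (𝓞 F)⁰ x := by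
    have h0 : FractionalIdeal.spanSingleton (𝓞 F)⁰ x0 ≠ 0 := by
      rw [ne_eq, FractionalIdeal.spanSingleton_eq_zero_iff]; exact hx0
    have h1 : FractionalIdeal.spanSingleton (𝓞 F)⁰ x ≠ 0 := by
      rw [ne_eq, FractionalIdeal.spanSingleton_eq_zero_iff]; exact hx
    rw [← FractionalIdeal.finprod_heightOneSpectrum_factorization' F h0,
      ← FractionalIdeal.finprod_heightOneSpectrum_factorization' F h1]
    refine finprod_congr fun v => ?_
    congr 1
    obtain ⟨a, ha⟩ := WithZero.ne_zero_iff_exists.mp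
      ((Valuation.ne_zero_iff _).mpr hx0 : v.valuation F x0 ≠ 0)
    have hform : v.valuation F x0 = ((Multiplicative.ofAdd (-(-Multiplicative.toAdd a)) :
        Multiplicative ℤ) : WithZero (Multiplicative ℤ)) := by
      rw [neg_neg, ofAdd_toAdd, ha]
    rw [aux_count_spanSingleton hx0 v hform,
      aux_count_spanSingleton hx v ((hvv v).trans hform)]
  obtain ⟨z, hz⟩ := FractionalIdeal.spanSingleton_eq_spanSingleton.mp hI
  exact ⟨z, by rw [← hz, Units.smul_def, Algebra.smul_def]⟩

end AuxArith

section AuxUnits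

open NumberField.Units

variable {F : Type*} [Field F] [NumberField F]

private lemma aux_sum_log_unit (m : (𝓞 F)ˣ) :
    ∑ w : InfinitePlace F, (w.mult : ℝ) * Real.log (w (algebraMap (𝓞 F) F m)) = 0 := by
  have h1 := InfinitePlace.prod_eq_abs_norm (K := F) (algebraMap (𝓞 F) F m)
  have h2 : |(Algebra.norm ℚ (algebraMap (𝓞 F) F m) : ℚ)| = 1 :=
    _root_.NumberField.Units.norm F m
  have h3 : ∏ w : InfinitePlace F, (w (algebraMap (𝓞 F) F m)) ^ w.mult = 1 := by
    rw [h1, h2]; norm_num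
  have h4 := congrArg Real.log h3
  rw [Real.log_prod, Real.log_one] at h4
  · rw [← h4]
    exact Finset.sum_congr rfl fun w _ => (Real.log_pow _ _).symm
  · intro w _
    exact pow_ne_zero _ (by
      rw [ne_eq, map_eq_zero]
      exact coe_ne_zero m)

private lemma aux_unit_box (m : (𝓞 F)ˣ) {a : InfinitePlace F → ℝ} (ha : ∀ w, 0 ≤ a w)
    (h : ∀ w : InfinitePlace F, (w.mult : ℝ) * Real.log (w (algebraMap (𝓞 F) F m)) ≤ a w) :
    ∀ w : InfinitePlace F, |(w.mult : ℝ) * Real.log (w (algebraMap (𝓞 F) F m))| ≤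
      ∑ w' : InfinitePlace F, a w' := by
  intro w
  classical
  set g : InfinitePlace F → ℝ := fun w => (w.mult : ℝ) * Real.log (w (algebraMap (𝓞 F) F m))
    with hg
  have hsum : ∑ w', g w' = 0 := aux_sum_log_unit m
  rw [abs_le]
  constructor
  · have h1 : ∑ w' ∈ Finset.univ.erase w, g w' + g w = 0 := by
      rw [Finset.sum_erase_add _ _ (Finset.mem_univ w)]; exact hsum
    have h2 : ∑ w' ∈ Finset.univ.erase w, g w' ≤ ∑ w' ∈ Finset.univ.erase w, a w' :=
      Finset.sum_le_sum fun i _ => h i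
    have h3 : ∑ w' ∈ Finset.univ.erase w, a w' ≤ ∑ w', a w' :=
      Finset.sum_le_sum_of_subset_of_nonneg (Finset.subset_univ _) fun i _ _ => ha i
    have hgw : g w = (w.mult : ℝ) * Real.log (w (algebraMap (𝓞 F) F m)) := rfl
    linarith
  · exact (h w).trans (Finset.single_le_sum (fun i _ => ha i) (Finset.mem_univ w))

private lemma aux_repr_bound (F : Type*) [Field F] [NumberField F] :
    ∃ Kc : ℝ, 1 ≤ Kc ∧ ∀ (u : (𝓞 F)ˣ) (i : Fin (rank F)),
    |(((basisModTorsion F).repr (Additive.ofMul (↑u : (𝓞 F)ˣ ⧸ torsion F)) i : ℤ) : ℝ)| ≤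
      Kc * ‖logEmbedding F (Additive.ofMul u)‖ := by
  classical
  set b := basisUnitLattice F
  set bR := Module.Basis.ofZLatticeBasis ℝ (unitLattice F) b with hbR
  set φ : Fin (rank F) → _ := fun i => LinearMap.toContinuousLinearMap (bR.coord i) with hφ
  refine ⟨1 + ∑ i, ‖φ i‖, le_add_of_nonneg_right (by positivity), fun u i => ?_⟩
  have hmem : logEmbedding F (Additive.ofMul u) ∈ unitLattice F :=
    ⟨Additive.ofMul u, trivial, rfl⟩
  set l : unitLattice F := ⟨_, hmem⟩ with hl
  have heq1 : logEmbeddingEquiv F (Additive.ofMul (↑u : (𝓞 F)ˣ ⧸ torsion F)) = l := by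
    apply Subtype.ext
    exact logEmbeddingEquiv_apply F u
  have heq2 : (basisModTorsion F).repr (Additive.ofMul (↑u : (𝓞 F)ˣ ⧸ torsion F)) i
      = b.repr l i := by
    rw [show b = (basisModTorsion F).map (logEmbeddingEquiv F) from rfl, Module.Basis.map_repr,
      ← heq1]
    simp
  have heq3 : (((basisModTorsion F).repr (Additive.ofMul (↑u : (𝓞 F)ˣ ⧸ torsion F)) i : ℤ) : ℝ)
      = φ i (logEmbedding F (Additive.ofMul u)) := by
    rw [heq2, hφ]
    simp only [LinearMap.coe_toContinuousLinearMap', Module.Basis.coord_apply]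
    rw [show logEmbedding F (Additive.ofMul u) = (l : _) from rfl,
      Module.Basis.ofZLatticeBasis_repr_apply]
  rw [heq3]
  calc |φ i (logEmbedding F (Additive.ofMul u))|
      ≤ ‖φ i‖ * ‖logEmbedding F (Additive.ofMul u)‖ := (φ i).le_opNorm _
    _ ≤ (1 + ∑ j, ‖φ j‖) * ‖logEmbedding F (Additive.ofMul u)‖ := by
        apply mul_le_mul_of_nonneg_right _ (norm_nonneg _)
        have : ‖φ i‖ ≤ ∑ j, ‖φ j‖ :=
          Finset.single_le_sum (fun j _ => norm_nonneg (φ j)) (Finset.mem_univ i)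
        linarith

private lemma aux_exp_bound {δ A : ℝ} (hδ : 0 < δ) (hA : 0 ≤ A) :
    1 + A ≤ (1 + δ⁻¹) * Real.exp (δ * A) := by
  have h1 := Real.add_one_le_exp (δ * A)
  have h3 : 0 < δ⁻¹ := by positivity
  have h4 : δ⁻¹ * (δ * A + 1) ≤ δ⁻¹ * Real.exp (δ * A) :=
    mul_le_mul_of_nonneg_left h1 h3.le
  have h5 : δ⁻¹ * (δ * A + 1) = A + δ⁻¹ := by
    rw [mul_add, ← mul_assoc, inv_mul_cancel₀ hδ.ne', one_mul, mul_one]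
  have h6 : 0 ≤ δ * A := by positivity
  nlinarith [Real.exp_pos (δ * A)]

end AuxUnits

open NumberField.Units

/-- (Adelic counting, Lemma 6(b).) With an idele `t` described as in
Lemma 6(a) — local modules `(y w)^(mult w)` at the infinite places and valuations `e v`
(supported on a finite set `S`) at the finite places, of total module
`|t|_𝔸 = ∏_w (y w)^(mult w) · ∏_{v ∈ S} (N v)^(-e v)` — the number of `x ∈ F^×` with
`|x|_v ≤ |t_v|_v` for all `v ∣ ∞` and `|x|_v = |t_v|_v` for all `v ∤ ∞` is
`≪_{F,ε} |t|_𝔸^ε` for every `ε > 0`. -/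
theorem card_field_elements_le_module_pow_eps (F : Type*) [Field F] [NumberField F] :
    ∀ ε : ℝ, 0 < ε → ∃ C : ℝ, 0 < C ∧
      ∀ (y : InfinitePlace F → ℝ), (∀ w, 0 < y w) →
      ∀ (S : Finset (HeightOneSpectrum (𝓞 F))) (e : HeightOneSpectrum (𝓞 F) → ℤ),
        (∀ v ∉ S, e v = 0) →
        (Nat.card {x : F // x ≠ 0 ∧
            (∀ w : InfinitePlace F, (w x) ^ w.mult ≤ (y w) ^ w.mult) ∧
            (∀ v : HeightOneSpectrum (𝓞 F),
              v.valuation F x = ((Multiplicative.ofAdd (-(e v)) : Multiplicative ℤ) :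
                WithZero (Multiplicative ℤ)))} : ℝ) ≤
          C * ((∏ w : InfinitePlace F, (y w) ^ w.mult) *
            ∏ v ∈ S, (Ideal.absNorm v.asIdeal : ℝ) ^ (-(e v))) ^ ε := by
  classical
  intro ε hε
  obtain ⟨Kc, hKc1, hKc⟩ := aux_repr_bound F
  set d := rank F with hd
  set δ : ℝ := ε / max (d : ℝ) 1 with hδdef
  have hδ : 0 < δ := by positivity
  have hτpos : 0 < (Nat.card (torsion F) : ℝ) := by exact_mod_cast Nat.card_pos
  refine ⟨(Nat.card (torsion F) : ℝ) * (2 * Kc + 3) ^ d * (1 + δ⁻¹) ^ d,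
    by positivity, ?_⟩
  intro y hy S e he
  set T := {x : F // x ≠ 0 ∧
      (∀ w : InfinitePlace F, (w x) ^ w.mult ≤ (y w) ^ w.mult) ∧
      (∀ v : HeightOneSpectrum (𝓞 F),
        v.valuation F x = ((Multiplicative.ofAdd (-(e v)) : Multiplicative ℤ) :
          WithZero (Multiplicative ℤ)))} with hT
  set Py := ∏ w : InfinitePlace F, (y w) ^ w.mult with hPy
  set Q := ∏ v ∈ S, (Ideal.absNorm v.asIdeal : ℝ) ^ (-(e v)) with hQdef
  have hPypos : 0 < Py := Finset.prod_pos fun w _ => pow_pos (hy w) _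
  have hQnonneg : 0 ≤ Q := Finset.prod_nonneg fun v _ => zpow_nonneg (Nat.cast_nonneg _) _
  by_cases hne : Nonempty T
  swap
  · rw [not_nonempty_iff] at hne
    rw [Nat.card_of_isEmpty]
    have h1 : (0:ℝ) ≤ (Py * Q) ^ ε := Real.rpow_nonneg (mul_nonneg hPypos.le hQnonneg) ε
    have h2 : (0:ℝ) ≤ (Nat.card (torsion F) : ℝ) * (2 * Kc + 3) ^ d * (1 + δ⁻¹) ^ d := by
      positivity
    push_cast
    exact mul_nonneg h2 h1
  obtain ⟨⟨x0, hx00, hx0w, hx0v⟩⟩ := hne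
  -- basic facts about x0
  set P0 := ∏ w : InfinitePlace F, (w x0) ^ w.mult with hP0
  have hwx0pos : ∀ w : InfinitePlace F, 0 < w x0 :=
    fun w => InfinitePlace.pos_iff.mpr hx00
  have hP0pos : 0 < P0 := Finset.prod_pos fun w _ => pow_pos (hwx0pos w) _
  have hwx0y : ∀ w : InfinitePlace F, w x0 ≤ y w := fun w =>
    (pow_le_pow_iff_left₀ (hwx0pos w).le (hy w).le InfinitePlace.mult_ne_zero).mp (hx0w w)
  have hP0Py : P0 ≤ Py :=
    Finset.prod_le_prod (fun w _ => pow_nonneg (hwx0pos w).le _)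
      (fun w _ => pow_le_pow_left₀ (hwx0pos w).le (hwx0y w) _)
  set A := Real.log Py - Real.log P0 with hA
  have hA0 : 0 ≤ A := sub_nonneg.mpr (Real.log_le_log hP0pos hP0Py)
  -- product formula : P0 = ∏_{v ∈ S} N(v)^{e v}
  have hpf : P0 = ∏ v ∈ S, (Ideal.absNorm v.asIdeal : ℝ) ^ (e v) := by
    have h1 := aux_pf hx00 S e he hx0v
    have h2 := InfinitePlace.prod_eq_abs_norm (K := F) x0
    rw [hP0, h2, h1]
    push_cast
    rfl
  have hQP0 : Q = P0⁻¹ := by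
    rw [hQdef, hpf, ← Finset.prod_inv_distrib]
    exact Finset.prod_congr rfl fun v _ => by rw [zpow_neg]
  have hMexp : Py * Q = Real.exp A := by
    rw [hQP0, hA, Real.exp_sub, Real.exp_log hPypos, Real.exp_log hP0pos, div_eq_mul_inv]
  -- the unit attached to each element of T
  have hmex : ∀ x : T, ∃ m : (𝓞 F)ˣ, (x : F) = algebraMap (𝓞 F) F m * x0 := by
    rintro ⟨x, hx0', hxw, hxv⟩
    exact aux_unit hx0' hx00 (fun v => by rw [hxv v, hx0v v])
  choose m hm using hmex
  -- log bounds for the units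
  have key : ∀ (x : T) (w : InfinitePlace F),
      |(w.mult : ℝ) * Real.log (w (algebraMap (𝓞 F) F (m x)))| ≤ A := by
    intro x w
    set a : InfinitePlace F → ℝ :=
      fun w => (w.mult : ℝ) * (Real.log (y w) - Real.log (w x0)) with ha
    have hanonneg : ∀ w, 0 ≤ a w := fun w =>
      mul_nonneg (Nat.cast_nonneg _)
        (sub_nonneg.mpr (Real.log_le_log (hwx0pos w) (hwx0y w)))
    have hbound : ∀ w : InfinitePlace F,
        (w.mult : ℝ) * Real.log (w (algebraMap (𝓞 F) F (m x))) ≤ a w := by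
      intro w
      have hxne : (x : F) ≠ 0 := x.2.1
      have hwxpos : 0 < w (x : F) := InfinitePlace.pos_iff.mpr hxne
      have hwmpos : 0 < w (algebraMap (𝓞 F) F (m x)) :=
        InfinitePlace.pos_iff.mpr (coe_ne_zero (m x))
      have hwx : w (x : F) = w (algebraMap (𝓞 F) F (m x)) * w x0 := by
        rw [hm x, map_mul]
      have hlog : Real.log (w (algebraMap (𝓞 F) F (m x)))
          = Real.log (w (x : F)) - Real.log (w x0) := by
        rw [hwx, Real.log_mul hwmpos.ne' (hwx0pos w).ne']
        ring
      rw [hlog]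
      have hwxy : w (x : F) ≤ y w :=
        (pow_le_pow_iff_left₀ hwxpos.le (hy w).le InfinitePlace.mult_ne_zero).mp (x.2.2.1 w)
      have : Real.log (w (x : F)) ≤ Real.log (y w) := Real.log_le_log hwxpos hwxy
      exact mul_le_mul_of_nonneg_left (by linarith) (Nat.cast_nonneg _)
    have hsa : ∑ w', a w' = A := by
      have hly : Real.log Py = ∑ w : InfinitePlace F, (w.mult : ℝ) * Real.log (y w) := by
        rw [hPy, Real.log_prod (fun w _ => (pow_pos (hy w) _).ne')]
        exact Finset.sum_congr rfl fun w _ => Real.log_pow _ _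
      have hl0 : Real.log P0 = ∑ w : InfinitePlace F, (w.mult : ℝ) * Real.log (w x0) := by
        rw [hP0, Real.log_prod (fun w _ => (pow_pos (hwx0pos w) _).ne')]
        exact Finset.sum_congr rfl fun w _ => Real.log_pow _ _
      rw [hA, hly, hl0, ← Finset.sum_sub_distrib]
      exact Finset.sum_congr rfl fun w _ => by rw [ha]; ring
    have := aux_unit_box (m x) hanonneg hbound w
    rwa [hsa] at this
  have hnorm : ∀ x : T, ‖logEmbedding F (Additive.ofMul (m x))‖ ≤ A := by
    intro x
    rw [pi_norm_le_iff_of_nonneg hA0]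
    intro w
    rw [Real.norm_eq_abs]
    have := key x w.val
    exact this
  -- decomposition of the units
  set c : T → torsion F × (Fin d → ℤ) :=
    fun x => Classical.choose (exist_unique_eq_mul_prod F (m x)) with hc
  have hcspec : ∀ x : T, m x = ((c x).1 : (𝓞 F)ˣ) * ∏ i, fundSystem F i ^ ((c x).2 i) :=
    fun x => (Classical.choose_spec (exist_unique_eq_mul_prod F (m x))).1
  have hrepr : ∀ x : T, (c x).2 =
      fun i => (basisModTorsion F).repr (Additive.ofMul (↑(m x) : (𝓞 F)ˣ ⧸ torsion F)) i := by
    intro x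
    have := fun_eq_repr F (c x).1.2 (hcspec x)
    rw [this]
  set N : ℤ := ⌈Kc * A⌉ with hN
  have hKcA : 0 ≤ Kc * A := mul_nonneg (by linarith) hA0
  have hNnn : 0 ≤ N := Int.ceil_nonneg hKcA
  have hbox : ∀ (x : T) (i : Fin d), (c x).2 i ∈ Finset.Icc (-N) N := by
    intro x i
    have h1 : |(((c x).2 i : ℤ) : ℝ)| ≤ Kc * A := by
      rw [hrepr x]
      calc |(((basisModTorsion F).repr (Additive.ofMul (↑(m x) : (𝓞 F)ˣ ⧸ torsion F)) i : ℤ) : ℝ)|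
          ≤ Kc * ‖logEmbedding F (Additive.ofMul (m x))‖ := hKc (m x) i
        _ ≤ Kc * A := mul_le_mul_of_nonneg_left (hnorm x) (by linarith)
    have h2 : Kc * A ≤ (N : ℝ) := Int.le_ceil _
    rw [abs_le] at h1
    rw [Finset.mem_Icc]
    constructor
    · have : -(N : ℝ) ≤ (((c x).2 i : ℤ) : ℝ) := by linarith [h1.1]
      exact_mod_cast this
    · have : (((c x).2 i : ℤ) : ℝ) ≤ (N : ℝ) := by linarith [h1.2]
      exact_mod_cast this
  -- the injection
  set φ : T → torsion F × (Fin d → (Finset.Icc (-N) N : Finset ℤ)) :=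
    fun x => ((c x).1, fun i => ⟨(c x).2 i, hbox x i⟩) with hφ
  have hφinj : Function.Injective φ := by
    intro x1 x2 h
    rw [hφ, Prod.mk.injEq] at h
    have hc12 : c x1 = c x2 := by
      refine Prod.ext h.1 (funext fun i => ?_)
      have := congrFun h.2 i
      exact congrArg Subtype.val this
    have hm12 : m x1 = m x2 := by rw [hcspec x1, hcspec x2, hc12]
    exact Subtype.ext (by rw [hm x1, hm x2, hm12])
  have hcard : Nat.card T ≤
      Nat.card (torsion F × (Fin d → (Finset.Icc (-N) N : Finset ℤ))) :=
    Nat.card_le_card_of_injective φ hφinj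
  have htarget : Nat.card (torsion F × (Fin d → (Finset.Icc (-N) N : Finset ℤ)))
      = Nat.card (torsion F) * (Finset.Icc (-N) N).card ^ d := by
    rw [Nat.card_prod, Nat.card_pi]
    congr 1
    rw [Finset.prod_const, Nat.card_eq_finsetCard, Finset.card_univ, Fintype.card_fin]
  -- numeric bounds
  have hIcc : (((Finset.Icc (-N) N).card : ℕ) : ℝ) ≤ (2 * Kc + 3) * (1 + A) := by
    rw [Int.card_Icc]
    have he1 : (((N + 1 - -N).toNat : ℕ) : ℝ) = 2 * (N : ℝ) + 1 := by
      have h0 : (((N + 1 - -N).toNat : ℕ) : ℤ) = 2 * N + 1 := by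
        rw [Int.toNat_of_nonneg (by omega)]
        ring
      have h1 := congrArg (fun z : ℤ => (z : ℝ)) h0
      push_cast at h1
      linarith
    rw [he1]
    have hceil : (N : ℝ) < Kc * A + 1 := Int.ceil_lt_add_one _
    nlinarith
  have hδd : (d : ℝ) * δ ≤ ε := by
    rw [hδdef]
    have hmax : 0 < max (d : ℝ) 1 := lt_max_of_lt_right one_pos
    calc (d : ℝ) * (ε / max (d : ℝ) 1) = ε * ((d : ℝ) / max (d : ℝ) 1) := by ring
      _ ≤ ε * 1 := by
          refine mul_le_mul_of_nonneg_left ?_ hε.le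
          rw [div_le_one hmax]
          exact le_max_left _ _
      _ = ε := mul_one ε
  -- final chain
  have hchain : (Nat.card T : ℝ) ≤ (Nat.card (torsion F) : ℝ) * (2 * Kc + 3) ^ d
      * (1 + δ⁻¹) ^ d * Real.exp (ε * A) := by
    calc (Nat.card T : ℝ)
        ≤ ((Nat.card (torsion F) * (Finset.Icc (-N) N).card ^ d : ℕ) : ℝ) := by
          exact_mod_cast hcard.trans_eq htarget
      _ = (Nat.card (torsion F) : ℝ) * (((Finset.Icc (-N) N).card : ℕ) : ℝ) ^ d := by
          push_cast; ring
      _ ≤ (Nat.card (torsion F) : ℝ) * ((2 * Kc + 3) * (1 + A)) ^ d := by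
          refine mul_le_mul_of_nonneg_left (pow_le_pow_left₀ (Nat.cast_nonneg _) hIcc d)
            hτpos.le
      _ = (Nat.card (torsion F) : ℝ) * (2 * Kc + 3) ^ d * (1 + A) ^ d := by
          rw [mul_pow]; ring
      _ ≤ (Nat.card (torsion F) : ℝ) * (2 * Kc + 3) ^ d
          * ((1 + δ⁻¹) * Real.exp (δ * A)) ^ d := by
          refine mul_le_mul_of_nonneg_left
            (pow_le_pow_left₀ (by linarith) (aux_exp_bound hδ hA0) d) ?_
          have : (0 : ℝ) ≤ (2 * Kc + 3) ^ d := by positivity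
          positivity
      _ = (Nat.card (torsion F) : ℝ) * (2 * Kc + 3) ^ d * (1 + δ⁻¹) ^ d
          * Real.exp (δ * A) ^ d := by rw [mul_pow]; ring
      _ ≤ (Nat.card (torsion F) : ℝ) * (2 * Kc + 3) ^ d * (1 + δ⁻¹) ^ d
          * Real.exp (ε * A) := by
          refine mul_le_mul_of_nonneg_left ?_ (by positivity)
          rw [← Real.exp_nat_mul]
          refine Real.exp_le_exp.mpr ?_
          have : (d : ℝ) * (δ * A) = ((d : ℝ) * δ) * A := by ring
          rw [this]
          exact mul_le_mul_of_nonneg_right hδd hA0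
  have hMrpow : (Py * Q) ^ ε = Real.exp (ε * A) := by
    rw [hMexp, Real.rpow_def_of_pos (Real.exp_pos A), Real.log_exp, mul_comm]
  calc (Nat.card T : ℝ)
      ≤ (Nat.card (torsion F) : ℝ) * (2 * Kc + 3) ^ d * (1 + δ⁻¹) ^ d
        * Real.exp (ε * A) := hchain
    _ = (Nat.card (torsion F) : ℝ) * (2 * Kc + 3) ^ d * (1 + δ⁻¹) ^ d * (Py * Q) ^ ε := by
        rw [hMrpow]
end

section
/- Let F be a number field, y ∈ F_∞^× an element of the product of archimedean completions, and m a nonzero fractional ideal of F. Then the number of x ∈ F^× with |x|_v ≤ |y_v|_v for all archimedean places v and x·O_F ⊆ m is at most C·|y|_∞/N(m), where |y|_∞ = ∏_{v|∞}|y_v|_v, N(m) is the absolute norm of m, and C depends only on F. -/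
open NumberField nonZeroDivisors
open FractionalIdeal Module

section Helpers

variable {F : Type*} [Field F] [NumberField F]

lemma absNorm_le_of_mem_aux {m : FractionalIdeal (𝓞 F)⁰ F} (hm : m ≠ 0)
    {x : F} (hx : x ≠ 0) (hxm : x ∈ m) :
    FractionalIdeal.absNorm m ≤ |Algebra.norm ℚ x| := by
  have hsp : spanSingleton (𝓞 F)⁰ x ≤ m := spanSingleton_le_iff_mem.mpr hxm
  have h1 : spanSingleton (𝓞 F)⁰ x * m⁻¹ ≤ 1 := by
    have h2 : spanSingleton (𝓞 F)⁰ x * m⁻¹ ≤ m * m⁻¹ := by gcongr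
    rwa [mul_inv_cancel₀ hm] at h2
  obtain ⟨J, hJ⟩ := le_one_iff_exists_coeIdeal.mp h1
  have hs0 : spanSingleton (𝓞 F)⁰ x ≠ 0 := by
    rwa [ne_eq, spanSingleton_eq_zero_iff]
  have hJ0 : (J : FractionalIdeal (𝓞 F)⁰ F) ≠ 0 := by
    rw [hJ]; exact mul_ne_zero hs0 (inv_ne_zero hm)
  have hx_eq : spanSingleton (𝓞 F)⁰ x = (J : FractionalIdeal (𝓞 F)⁰ F) * m := by
    rw [hJ, mul_assoc, inv_mul_cancel₀ hm, mul_one]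
  have h3 := congrArg FractionalIdeal.absNorm hx_eq
  rw [absNorm_span_singleton, _root_.map_mul, coeIdeal_absNorm] at h3
  have hJ1 : (1 : ℚ) ≤ (Ideal.absNorm J : ℚ) := by
    have : J ≠ ⊥ := by
      simpa [FractionalIdeal.coeIdeal_eq_zero] using hJ0
    exact_mod_cast Nat.one_le_iff_ne_zero.mpr (by
      simpa [Ideal.absNorm_eq_zero_iff] using this)
  rw [h3]
  exact le_mul_of_one_le_left (absNorm_nonneg m) hJ1

/-- Real version: if `x ≠ 0` lies in a nonzero fractional ideal `m`, then
`N(m) ≤ ∏ w x ^ mult w`. -/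
lemma absNorm_le_prod_aux {m : FractionalIdeal (𝓞 F)⁰ F} (hm : m ≠ 0)
    {x : F} (hx : x ≠ 0) (hxm : x ∈ m) :
    ((FractionalIdeal.absNorm m : ℚ) : ℝ) ≤ ∏ w : InfinitePlace F, (w x) ^ w.mult := by
  rw [InfinitePlace.prod_eq_abs_norm]
  exact_mod_cast absNorm_le_of_mem_aux hm hx hxm

end Helpers

/-- (Corollary 1(a).) For a number field `F`, an archimedean bound
`y` (with `|y|_∞ = ∏_w (y w)^(mult w)`) and a nonzero fractional ideal `m`, the number of
`x ∈ F^×` with `|x|_w ≤ |y_w|_w` at all infinite places `w` and `x·𝓞_F ⊆ m` is at most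
`C · |y|_∞ / N(m)` with `C` depending only on `F`. -/
theorem card_elements_in_fractional_ideal_le (F : Type*) [Field F] [NumberField F] :
    ∃ C : ℝ, 0 < C ∧
      ∀ (y : InfinitePlace F → ℝ), (∀ w, 0 < y w) →
      ∀ m : FractionalIdeal (𝓞 F)⁰ F, m ≠ 0 →
        (Nat.card {x : F // x ≠ 0 ∧
            (∀ w : InfinitePlace F, (w x) ^ w.mult ≤ (y w) ^ w.mult) ∧
            FractionalIdeal.spanSingleton (𝓞 F)⁰ x ≤ m} : ℝ) ≤
          C * (∏ w : InfinitePlace F, (y w) ^ w.mult) / (FractionalIdeal.absNorm m : ℝ) := by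
  set n := finrank ℚ F with hn_def
  have hn : 0 < n := finrank_pos
  refine ⟨4 ^ n, by positivity, ?_⟩
  intro y hy m hm
  set Y := ∏ w : InfinitePlace F, (y w) ^ w.mult with hY_def
  have hY : 0 < Y := Finset.prod_pos fun w _ => pow_pos (hy w) _
  set Nm : ℝ := ((FractionalIdeal.absNorm m : ℚ) : ℝ) with hNm_def
  have hNm : 0 < Nm := by
    have h1 : FractionalIdeal.absNorm m ≠ 0 := by
      simpa [FractionalIdeal.absNorm_eq_zero_iff] using hm
    have h2 := FractionalIdeal.absNorm_nonneg m
    rw [hNm_def]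
    exact_mod_cast lt_of_le_of_ne h2 (Ne.symm h1)
  set S := {x : F // x ≠ 0 ∧
      (∀ w : InfinitePlace F, (w x) ^ w.mult ≤ (y w) ^ w.mult) ∧
      FractionalIdeal.spanSingleton (𝓞 F)⁰ x ≤ m} with hS_def
  by_cases hS : Nonempty S
  swap
  · have : Nat.card S = 0 := by
      rw [not_nonempty_iff] at hS
      exact Nat.card_of_isEmpty
    rw [this]
    push_cast
    positivity
  -- members of S satisfy w x ≤ y w
  have hbox : ∀ x : S, ∀ w : InfinitePlace F, w x.1 ≤ y w := by
    intro x w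
    have := x.2.2.1 w
    exact (pow_le_pow_iff_left₀ (apply_nonneg w _) (hy w).le w.mult_ne_zero).mp this
  have hmem : ∀ x : S, x.1 ∈ m := fun x => spanSingleton_le_iff_mem.mp x.2.2.2
  -- nonemptiness gives Nm ≤ Y
  obtain ⟨x₀⟩ := hS
  have hNmY : Nm ≤ Y := by
    refine le_trans (absNorm_le_prod_aux hm x₀.2.1 (hmem x₀)) ?_
    exact Finset.prod_le_prod (fun w _ => pow_nonneg (apply_nonneg w _) _)
      (fun w _ => x₀.2.2.1 w)
  -- choice of q
  set t : ℝ := (2 ^ n * Y / Nm) ^ ((n : ℝ)⁻¹) with ht_def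
  have hbase : 0 < 2 ^ n * Y / Nm := by positivity
  have ht0 : 0 < t := Real.rpow_pos_of_pos hbase _
  have htn : t ^ n = 2 ^ n * Y / Nm := by
    rw [ht_def, ← Real.rpow_natCast (_ ^ _) n, ← Real.rpow_mul hbase.le,
      inv_mul_cancel₀ (by exact_mod_cast hn.ne'), Real.rpow_one]
  have ht1 : 1 ≤ t := by
    by_contra h
    push_neg at h
    have : t ^ n < 1 := pow_lt_one₀ ht0.le h hn.ne'
    rw [htn] at this
    have h2n : (1 : ℝ) ≤ 2 ^ n := one_le_pow₀ (by norm_num)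
    have : 2 ^ n * Y / Nm < 1 := this
    rw [div_lt_one hNm] at this
    nlinarith
  set q : ℕ := ⌊t⌋₊ + 1 with hq_def
  have hq0 : 0 < q := Nat.succ_pos _
  haveI : NeZero q := ⟨hq0.ne'⟩
  have hqt : t < (q : ℝ) := by
    rw [hq_def]
    push_cast
    exact Nat.lt_floor_add_one t
  have hq2t : (q : ℝ) ≤ 2 * t := by
    have h1 : (⌊t⌋₊ : ℝ) ≤ t := Nat.floor_le ht0.le
    rw [hq_def]
    push_cast
    linarith
  have hqn : 2 ^ n * Y < (q : ℝ) ^ n * Nm := by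
    have h1 : t ^ n < (q : ℝ) ^ n := pow_lt_pow_left₀ hqt ht0.le hn.ne'
    rw [htn, div_lt_iff₀ hNm] at h1
    linarith
  -- the lattice basis
  set U : (FractionalIdeal (𝓞 F)⁰ F)ˣ := Units.mk0 m hm with hU_def
  set b := basisOfFractionalIdeal F U with hb_def
  have hcard : Fintype.card (Free.ChooseBasisIndex ℤ (U : FractionalIdeal (𝓞 F)⁰ F)) = n := by
    rw [← finrank_eq_card_chooseBasisIndex]
    exact (fractionalIdeal_rank F U).trans (RingOfIntegers.rank F)
  set L : Submodule ℤ F := Submodule.span ℤ (Set.range (b : _ → F)) with hL_def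
  have hmemL : ∀ z : F, z ∈ L ↔ z ∈ m := by
    intro z
    rw [hL_def]
    exact mem_span_basisOfFractionalIdeal F
  classical
  set bL := Basis.restrictScalars ℤ (b : Basis _ ℚ F) with hbL_def
  have hxL : ∀ x : S, (x : F) ∈ L := fun x => (hmemL x.1).mpr (hmem x)
  set f : S → (Free.ChooseBasisIndex ℤ (U : FractionalIdeal (𝓞 F)⁰ F)) → ZMod q :=
    fun x i => (((bL.repr ⟨x.1, hxL x⟩) i : ℤ) : ZMod q) with hf_def
  have hf : Function.Injective f := by
    intro x x' hfx
    by_contra hne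
    have hzne : (x : F) - (x' : F) ≠ 0 := sub_ne_zero.mpr (fun h => hne (Subtype.ext h))
    set zL : L := ⟨x.1, hxL x⟩ - ⟨x'.1, hxL x'⟩ with hzL_def
    have hdvd : ∀ i, (q : ℤ) ∣ bL.repr zL i := by
      intro i
      have h1 : ((bL.repr ⟨x.1, hxL x⟩ i : ℤ) : ZMod q) =
          ((bL.repr ⟨x'.1, hxL x'⟩ i : ℤ) : ZMod q) := congrFun hfx i
      have h2 := (ZMod.intCast_eq_intCast_iff _ _ _).mp h1
      have h3 := Int.ModEq.dvd h2.symm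
      rw [hzL_def, map_sub]
      simpa using h3
    choose e he using hdvd
    set wL : L := ∑ i, e i • bL i with hwL_def
    have hqw : (q : ℤ) • wL = zL := by
      rw [hwL_def, Finset.smul_sum]
      simp_rw [smul_smul, ← he]
      exact bL.sum_repr zL
    set wF : F := (wL : F) with hwF_def
    have hz_eq : (x : F) - (x' : F) = (q : ℤ) • wF := by
      have h4 := congrArg (Subtype.val : L → F) hqw
      simpa [hzL_def, hwF_def] using h4.symm
    have hw_mem : wF ∈ m := (hmemL _).mp wL.2
    have hwne : wF ≠ 0 := by
      intro h
      exact hzne (by rw [hz_eq, h, smul_zero])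
    have hNw : ((FractionalIdeal.absNorm m : ℚ) : ℝ) ≤ ∏ w : InfinitePlace F, (w wF) ^ w.mult :=
      absNorm_le_prod_aux hm hwne hw_mem
    set z : F := (x : F) - (x' : F) with hz_def
    have hz_eq' : z = algebraMap ℚ F (q : ℚ) * wF := by
      rw [hz_eq, zsmul_eq_mul]
      push_cast
      ring
    have hNz : ∏ w : InfinitePlace F, (w z) ^ w.mult
        = (q : ℝ) ^ n * ∏ w : InfinitePlace F, (w wF) ^ w.mult := by
      rw [InfinitePlace.prod_eq_abs_norm, InfinitePlace.prod_eq_abs_norm, hz_eq',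
        _root_.map_mul, Algebra.norm_algebraMap, abs_mul, abs_pow, Nat.abs_cast]
      push_cast
      rw [hn_def]
    have h2y : ∀ w : InfinitePlace F, w z ≤ 2 * y w := by
      intro w
      have h1 : w z ≤ w (x : F) + w (x' : F) := by
        calc w z = w.1 ((x : F) + -(x' : F)) := by rw [hz_def, sub_eq_add_neg]; rfl
          _ ≤ w.1 (x : F) + w.1 (-(x' : F)) := w.1.add_le _ _
          _ = w (x : F) + w (x' : F) := by rw [w.1.map_neg]; rfl
      have := hbox x w
      have := hbox x' w
      linarith
    have hzb : ∏ w : InfinitePlace F, (w z) ^ w.mult ≤ 2 ^ n * Y := by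
      calc ∏ w : InfinitePlace F, (w z) ^ w.mult
          ≤ ∏ w : InfinitePlace F, (2 * y w) ^ w.mult :=
            Finset.prod_le_prod (fun w _ => pow_nonneg (apply_nonneg w _) _)
              (fun w _ => pow_le_pow_left₀ (apply_nonneg w _) (h2y w) _)
        _ = 2 ^ n * Y := by
            simp_rw [mul_pow]
            rw [Finset.prod_mul_distrib, Finset.prod_pow_eq_pow_sum,
              InfinitePlace.sum_mult_eq, hY_def, hn_def]
    have hfinal : (q : ℝ) ^ n * Nm ≤ 2 ^ n * Y := by
      calc (q : ℝ) ^ n * Nm ≤ (q : ℝ) ^ n * ∏ w : InfinitePlace F, (w wF) ^ w.mult :=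
            mul_le_mul_of_nonneg_left hNw (by positivity)
        _ = ∏ w : InfinitePlace F, (w z) ^ w.mult := hNz.symm
        _ ≤ 2 ^ n * Y := hzb
    exact absurd hfinal (not_le.mpr hqn)
  have hcardS : Nat.card S ≤ q ^ n := by
    calc Nat.card S ≤ Nat.card ((Free.ChooseBasisIndex ℤ (U : FractionalIdeal (𝓞 F)⁰ F)) → ZMod q) :=
          Nat.card_le_card_of_injective f hf
      _ = q ^ n := by
          rw [Nat.card_eq_fintype_card, Fintype.card_fun, ZMod.card, hcard]
  have hbound : ((q : ℝ)) ^ n ≤ 4 ^ n * Y / Nm := by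
    calc ((q : ℝ)) ^ n ≤ (2 * t) ^ n := pow_le_pow_left₀ (by positivity) hq2t n
      _ = 2 ^ n * t ^ n := mul_pow 2 t n
      _ = 2 ^ n * (2 ^ n * Y / Nm) := by rw [htn]
      _ = (2 * 2) ^ n * Y / Nm := by rw [mul_pow]; ring
      _ = 4 ^ n * Y / Nm := by norm_num
  calc (Nat.card S : ℝ) ≤ (q : ℝ) ^ n := by exact_mod_cast hcardS
    _ ≤ 4 ^ n * Y / Nm := hbound
end

section
/- Let F be a number field, y ∈ F_∞^×, and m a nonzero fractional ideal of F. For every ε > 0, the number of x ∈ F^× with |x|_v ≤ |y_v|_v for all archimedean v and x·O_F = m (exact equality of ideals) is at most C_ε·(|y|_∞/N(m))^ε, with C_ε depending only on F and ε. -/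
open NumberField nonZeroDivisors

open NumberField.InfinitePlace NumberField.Units NumberField.Units.dirichletUnitTheorem Module

open Real in
lemma aux_poly_le_rpow (c : ℝ) (hc : 0 < c) (r : ℕ) {ε : ℝ} (hε : 0 < ε) :
    ∃ C : ℝ, 0 < C ∧ ∀ T : ℝ, 1 ≤ T → c * (1 + Real.log T) ^ r ≤ C * T ^ ε := by
  set δ := ε / (r + 1) with hδdef
  have hδ : 0 < δ := by positivity
  refine ⟨c * (1 + 1/δ) ^ r, by positivity, fun T hT => ?_⟩
  have h1 : (0:ℝ) < T := lt_of_lt_of_le one_pos hT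
  have hTδ : 1 ≤ T ^ δ := Real.one_le_rpow hT hδ.le
  have hlog : Real.log T ≤ T ^ δ / δ := Real.log_le_rpow_div h1.le hδ
  have h2 : 1 + Real.log T ≤ (1 + 1/δ) * T ^ δ := by
    have h3 : T ^ δ / δ = (1/δ) * T ^ δ := by ring
    nlinarith
  have h4 : (0:ℝ) ≤ 1 + Real.log T := by
    have := Real.log_nonneg hT; linarith
  have h5 : (1 + Real.log T) ^ r ≤ ((1 + 1/δ) * T ^ δ) ^ r := pow_le_pow_left₀ h4 h2 r
  have h6 : ((1 + 1/δ) * T ^ δ) ^ r = (1 + 1/δ) ^ r * T ^ (δ * r) := by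
    rw [mul_pow, ← Real.rpow_natCast (T ^ δ) r, ← Real.rpow_mul h1.le]
  have h7 : T ^ (δ * r) ≤ T ^ ε := by
    apply Real.rpow_le_rpow_of_exponent_le hT
    have : δ * (r + 1) = ε := by
      rw [hδdef]; field_simp
    nlinarith
  calc c * (1 + Real.log T) ^ r ≤ c * ((1 + 1/δ) ^ r * T ^ (δ * r)) := by
        rw [← h6]; exact mul_le_mul_of_nonneg_left h5 hc.le
    _ ≤ c * ((1 + 1/δ) ^ r * T ^ ε) := by
        apply mul_le_mul_of_nonneg_left _ hc.le
        exact mul_le_mul_of_nonneg_left h7 (by positivity)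
    _ = c * (1 + 1/δ) ^ r * T ^ ε := by ring


set_option maxHeartbeats 1000000 in
lemma aux_unit_box_count (F : Type*) [Field F] [NumberField F] :
    ∃ (c : ℝ) (r : ℕ), 0 < c ∧ ∀ B : InfinitePlace F → ℝ, (∀ w, 0 < B w) →
      1 ≤ ∏ w, B w ^ mult w →
      Finite {u : (𝓞 F)ˣ // ∀ w : InfinitePlace F, w (u : F) ≤ B w} ∧
      (Nat.card {u : (𝓞 F)ˣ // ∀ w : InfinitePlace F, w (u : F) ≤ B w} : ℝ) ≤
        c * (1 + Real.log (∏ w, B w ^ mult w)) ^ r := by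
  classical
  set L := Units.unitLattice F with hLdef
  have hfree : Module.Free ℤ L := ZLattice.module_free ℝ L
  have hfin : Module.Finite ℤ L := ZLattice.module_finite ℝ L
  set ι := Module.Free.ChooseBasisIndex ℤ L with hιdef
  set bZ : Basis ι ℤ L := Module.Free.chooseBasis ℤ L with hbZdef
  set bR := bZ.ofZLatticeBasis ℝ L with hbRdef
  set f : ({w : InfinitePlace F // w ≠ w₀} → ℝ) →ₗ[ℝ] (ι → ℝ) := bR.equivFun.toLinearMap with hfdef
  set c₀ : ℝ := ‖(LinearMap.toContinuousLinearMap f : _ →L[ℝ] _)‖ + 1 with hc₀def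
  have hc₀pos : 0 < c₀ := by positivity
  have hc₀ : ∀ x i, |bR.repr x i| ≤ c₀ * ‖x‖ := by
    intro x i
    have h1 : bR.repr x i = f x i := by simp [hfdef, Basis.equivFun_apply]
    rw [h1, ← Real.norm_eq_abs]
    calc ‖f x i‖ ≤ ‖f x‖ := norm_le_pi_norm (f x) i
      _ = ‖(LinearMap.toContinuousLinearMap f) x‖ := rfl
      _ ≤ ‖(LinearMap.toContinuousLinearMap f : _ →L[ℝ] _)‖ * ‖x‖ :=
          (LinearMap.toContinuousLinearMap f).le_opNorm x
      _ ≤ c₀ * ‖x‖ := by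
          apply mul_le_mul_of_nonneg_right _ (norm_nonneg x)
          rw [hc₀def]; linarith
  set t : ℕ := Nat.card (torsion F) with htdef
  have ht : 0 < t := Nat.card_pos
  refine ⟨t * (c₀ + 1) ^ Fintype.card ι, Fintype.card ι, by positivity, fun B hB hT1 => ?_⟩
  set T := ∏ w, B w ^ mult w with hTdef
  set Lg := Real.log T with hLgdef
  have hLg0 : 0 ≤ Lg := Real.log_nonneg hT1
  have key : ∀ u : (𝓞 F)ˣ, (∀ w : InfinitePlace F, w (u : F) ≤ B w) →
      ∀ w : InfinitePlace F,
        |mult w * Real.log (w (u : F)) - (Real.log (B w ^ mult w) - Lg/2)| ≤ Lg/2 := by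
    intro u hu w
    have hwpos : ∀ w' : InfinitePlace F, 0 < w' (u:F) := fun w' =>
      pos_iff.mpr (coe_ne_zero u)
    have hg_le : ∀ w' : InfinitePlace F,
        Real.log ((w' (u:F)) ^ mult w') - Real.log (B w' ^ mult w') ≤ 0 := by
      intro w'
      have h1 : (w' (u:F)) ^ mult w' ≤ (B w') ^ mult w' :=
        pow_le_pow_left₀ (apply_nonneg _ _) (hu w') _
      have h2 := Real.log_le_log (pow_pos (hwpos w') _) h1
      linarith
    have hprod : ∏ w', (w' (u:F)) ^ mult w' = 1 := by
      rw [prod_eq_abs_norm, Units.norm, Rat.cast_one]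
    have h3 : ∑ w', Real.log ((w' (u:F)) ^ mult w') = 0 := by
      rw [← Real.log_prod (fun w' _ => (pow_pos (hwpos w') _).ne'), hprod, Real.log_one]
    have h4 : ∑ w', Real.log (B w' ^ mult w') = Lg := by
      rw [← Real.log_prod (fun w' _ => (pow_pos (hB w') _).ne')]
    have h5 : ∑ w' : InfinitePlace F,
        (Real.log ((w' (u:F)) ^ mult w') - Real.log (B w' ^ mult w')) = -Lg := by
      rw [Finset.sum_sub_distrib, h3, h4]; ring
    have h6 : ∑ w' ∈ Finset.univ.erase w,
        (Real.log ((w' (u:F)) ^ mult w') - Real.log (B w' ^ mult w')) ≤ 0 :=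
      Finset.sum_nonpos (fun w' _ => hg_le w')
    have h7 : (Real.log ((w (u:F)) ^ mult w) - Real.log (B w ^ mult w)) +
        ∑ w' ∈ Finset.univ.erase w,
          (Real.log ((w' (u:F)) ^ mult w') - Real.log (B w' ^ mult w')) =
        ∑ w' : InfinitePlace F,
          (Real.log ((w' (u:F)) ^ mult w') - Real.log (B w' ^ mult w')) := by
      exact Finset.add_sum_erase Finset.univ (fun w' : InfinitePlace F => Real.log ((w' (u:F)) ^ mult w') - Real.log (B w' ^ mult w')) (Finset.mem_univ w)
    have h8 := hg_le w
    have h9 : mult w * Real.log (w (u:F)) = Real.log ((w (u:F)) ^ mult w) := (Real.log_pow _ _).symm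
    rw [abs_le, h9]
    constructor <;> linarith
  -- set up box data
  set d : ℝ := c₀ * (Lg/2) with hddef
  have hd0 : 0 ≤ d := by positivity
  set v₀ : {w : InfinitePlace F // w ≠ w₀} → ℝ :=
    fun i => Real.log (B i.1 ^ mult i.1) - Lg/2 with hv₀def
  set a : ι → ℝ := fun i => bR.repr v₀ i with hadef
  set box : ι → Finset ℤ := fun i => Finset.Icc ⌈a i - d⌉ ⌊a i + d⌋ with hboxdef
  -- the lattice point associated to a unit in the box
  have hvmem : ∀ u : (𝓞 F)ˣ, logEmbedding F (Additive.ofMul u) ∈ L := fun u =>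
    Submodule.mem_map.mpr ⟨Additive.ofMul u, Submodule.mem_top, rfl⟩
  have hdist : ∀ u : (𝓞 F)ˣ, (∀ w : InfinitePlace F, w (u : F) ≤ B w) →
      ‖logEmbedding F (Additive.ofMul u) - v₀‖ ≤ Lg/2 := by
    intro u hu
    refine (pi_norm_le_iff_of_nonneg (by positivity)).mpr (fun i => ?_)
    rw [Pi.sub_apply, Real.norm_eq_abs, logEmbedding_component]
    exact key u hu i.1
  have hnmem : ∀ (u : (𝓞 F)ˣ) (hu : ∀ w : InfinitePlace F, w (u : F) ≤ B w) (i : ι),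
      bZ.repr (⟨logEmbedding F (Additive.ofMul u), hvmem u⟩ : ↥L) i ∈ box i := by
    intro u hu i
    set v := logEmbedding F (Additive.ofMul u) with hvdef
    have h1 : ((bZ.repr (⟨v, hvmem u⟩ : ↥L) i : ℤ) : ℝ) = bR.repr v i :=
      (Basis.ofZLatticeBasis_repr_apply ℝ L bZ (⟨v, hvmem u⟩ : ↥L) i).symm
    have h2 : |bR.repr v i - a i| ≤ d := by
      have h3 : bR.repr v i - a i = bR.repr (v - v₀) i := by
        rw [map_sub, Finsupp.sub_apply, hadef]
      rw [h3]
      calc |bR.repr (v - v₀) i| ≤ c₀ * ‖v - v₀‖ := hc₀ _ i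
        _ ≤ c₀ * (Lg/2) := mul_le_mul_of_nonneg_left (hdist u hu) hc₀pos.le
    rw [Finset.mem_Icc]
    rw [abs_le] at h2
    constructor
    · rw [Int.ceil_le]; push_cast; rw [h1]; linarith [h2.1]
    · rw [Int.le_floor]; push_cast; rw [h1]; linarith [h2.2]
  -- section of logEmbedding on the lattice
  have exu : ∀ vv : L, ∃ α : Additive (𝓞 F)ˣ, logEmbedding F α = (vv : _) := by
    intro vv
    obtain ⟨α, -, hα⟩ := Submodule.mem_map.mp vv.2
    exact ⟨α, hα⟩
  choose sec hsec using exu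
  -- the injection
  set S := {u : (𝓞 F)ˣ // ∀ w : InfinitePlace F, w (u : F) ≤ B w} with hSdef
  have hΦtor : ∀ u : S, ((sec ⟨logEmbedding F (Additive.ofMul u.1), hvmem u.1⟩).toMul)⁻¹ * u.1
      ∈ torsion F := by
    intro u
    rw [← logEmbedding_eq_zero_iff]
    rw [ofMul_mul, ofMul_inv, ofMul_toMul, map_add, map_neg, hsec]
    exact neg_add_cancel _
  set Φ : S → (torsion F) × (∀ i : ι, (box i : Finset ℤ)) := fun u =>
    (⟨_, hΦtor u⟩, fun i => ⟨bZ.repr ⟨logEmbedding F (Additive.ofMul u.1), hvmem u.1⟩ i,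
      hnmem u.1 u.2 i⟩) with hΦdef
  have hΦinj : Function.Injective Φ := by
    intro u u' h
    have h1 := congr_arg Prod.snd h
    have h2 := congr_arg Prod.fst h
    simp only [hΦdef] at h1 h2
    have h3 : (⟨logEmbedding F (Additive.ofMul u.1), hvmem u.1⟩ : L) =
        ⟨logEmbedding F (Additive.ofMul u'.1), hvmem u'.1⟩ := by
      apply bZ.repr.injective
      ext i
      exact congr_arg Subtype.val (congr_fun h1 i)
    have h4 : sec ⟨logEmbedding F (Additive.ofMul u.1), hvmem u.1⟩ =
        sec ⟨logEmbedding F (Additive.ofMul u'.1), hvmem u'.1⟩ := by rw [h3]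
    have h5 := congr_arg Subtype.val h2
    simp only at h5
    rw [h4] at h5
    exact Subtype.ext (mul_left_cancel h5)
  have hfinS : Finite S := Finite.of_injective Φ hΦinj
  refine ⟨hfinS, ?_⟩
  have hcard : Nat.card S ≤ t * ∏ i : ι, (box i).card := by
    calc Nat.card S ≤ Nat.card ((torsion F) × (∀ i : ι, (box i : Finset ℤ))) :=
          Nat.card_le_card_of_injective Φ hΦinj
      _ = t * ∏ i : ι, (box i).card := by
          rw [Nat.card_prod, Nat.card_pi]
          congr 1
          exact Finset.prod_congr rfl (fun i _ => Nat.card_eq_finsetCard _)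
  have hboxcard : ∀ i : ι, ((box i).card : ℝ) ≤ (c₀ + 1) * (1 + Lg) := by
    intro i
    have h1 : (box i).card = (⌊a i + d⌋ + 1 - ⌈a i - d⌉).toNat := Int.card_Icc _ _
    have h2 : ((box i).card : ℝ) ≤ 2 * d + 1 := by
      rw [h1]
      rcases le_or_gt (⌊a i + d⌋ + 1 - ⌈a i - d⌉) 0 with h | h
      · rw [Int.toNat_of_nonpos h]; push_cast; linarith
      · have hz := Int.toNat_of_nonneg h.le
        have h3 : ((⌊a i + d⌋ : ℤ) : ℝ) ≤ a i + d := Int.floor_le _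
        have h4 : a i - d ≤ ((⌈a i - d⌉ : ℤ) : ℝ) := Int.le_ceil _
        calc ((⌊a i + d⌋ + 1 - ⌈a i - d⌉).toNat : ℝ)
            = ((⌊a i + d⌋ + 1 - ⌈a i - d⌉ : ℤ) : ℝ) := by exact_mod_cast congrArg (Int.cast : ℤ → ℝ) hz
          _ ≤ 2 * d + 1 := by push_cast; linarith
    have h5 : 2 * d + 1 ≤ (c₀ + 1) * (1 + Lg) := by
      rw [hddef]; nlinarith
    linarith
  calc (Nat.card S : ℝ) ≤ t * ∏ i : ι, ((box i).card : ℝ) := by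
        push_cast at hcard ⊢; exact_mod_cast hcard
    _ ≤ t * ∏ i : ι, ((c₀ + 1) * (1 + Lg)) := by
        apply mul_le_mul_of_nonneg_left _ (by positivity)
        exact Finset.prod_le_prod (fun i _ => Nat.cast_nonneg _) (fun i _ => hboxcard i)
    _ = t * ((c₀ + 1) ^ Fintype.card ι * (1 + Lg) ^ Fintype.card ι) := by
        rw [Finset.prod_const, Finset.card_univ, mul_pow]
    _ = t * (c₀ + 1) ^ Fintype.card ι * (1 + Lg) ^ Fintype.card ι := by ring



/-- (Corollary 1(b).) For a number field `F`, an archimedean bound `y`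
(with `|y|_∞ = ∏_w (y w)^(mult w)`), a nonzero fractional ideal `m` and any `ε > 0`, the
number of `x ∈ F^×` with `|x|_w ≤ |y_w|_w` at all infinite places and `x·𝓞_F = m` is at
most `C_ε · (|y|_∞ / N(m))^ε` with `C_ε` depending only on `F` and `ε`. -/
theorem card_generators_in_box_le (F : Type*) [Field F] [NumberField F] :
    ∀ ε : ℝ, 0 < ε → ∃ C : ℝ, 0 < C ∧
      ∀ (y : InfinitePlace F → ℝ), (∀ w, 0 < y w) →
      ∀ m : FractionalIdeal (𝓞 F)⁰ F, m ≠ 0 →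
        (Nat.card {x : F // x ≠ 0 ∧
            (∀ w : InfinitePlace F, (w x) ^ w.mult ≤ (y w) ^ w.mult) ∧
            FractionalIdeal.spanSingleton (𝓞 F)⁰ x = m} : ℝ) ≤
          C * ((∏ w : InfinitePlace F, (y w) ^ w.mult) / (FractionalIdeal.absNorm m : ℝ)) ^ ε := by
  intro ε hε
  obtain ⟨c, r, hc, hcount⟩ := aux_unit_box_count F
  obtain ⟨C, hC, hpoly⟩ := aux_poly_le_rpow c hc r hε
  refine ⟨C, hC, fun y hy m hm => ?_⟩
  have hNne : FractionalIdeal.absNorm m ≠ 0 :=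
    fun h => hm (FractionalIdeal.absNorm_eq_zero_iff.mp h)
  have hNpos : (0:ℝ) < (FractionalIdeal.absNorm m : ℝ) := by
    have h2 := FractionalIdeal.absNorm_nonneg m
    have : (0:ℚ) < FractionalIdeal.absNorm m := lt_of_le_of_ne h2 (Ne.symm hNne)
    exact_mod_cast this
  set T := (∏ w : InfinitePlace F, (y w) ^ mult w) / (FractionalIdeal.absNorm m : ℝ) with hTdef
  have hypos : (0:ℝ) < ∏ w : InfinitePlace F, (y w) ^ mult w :=
    Finset.prod_pos (fun w _ => pow_pos (hy w) _)
  have hTpos : 0 < T := div_pos hypos hNpos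
  by_cases hS : Nonempty {x : F // x ≠ 0 ∧
      (∀ w : InfinitePlace F, (w x) ^ mult w ≤ (y w) ^ mult w) ∧
      FractionalIdeal.spanSingleton (𝓞 F)⁰ x = m}
  · obtain ⟨x₀, hx₀ne, hx₀le, hx₀span⟩ := hS
    have hx₀pos : ∀ w : InfinitePlace F, 0 < w x₀ := fun w => pos_iff.mpr hx₀ne
    have hNm : (FractionalIdeal.absNorm m : ℝ) = ∏ w, (w x₀) ^ mult w := by
      rw [← hx₀span, FractionalIdeal.absNorm_span_singleton]
      exact (prod_eq_abs_norm x₀).symm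
    have hwle : ∀ w : InfinitePlace F, w x₀ ≤ y w := fun w =>
      le_of_pow_le_pow_left₀ mult_ne_zero (hy w).le (hx₀le w)
    set B : InfinitePlace F → ℝ := fun w => y w / w x₀ with hBdef
    have hBpos : ∀ w, 0 < B w := fun w => div_pos (hy w) (hx₀pos w)
    have hBT : ∏ w, B w ^ mult w = T := by
      rw [hTdef, hNm, hBdef]
      simp_rw [div_pow]
      rw [Finset.prod_div_distrib]
    have hT1 : 1 ≤ T := by
      rw [hTdef, hNm, le_div_iff₀ (by rw [← hNm]; exact hNpos), one_mul]
      exact Finset.prod_le_prod (fun w _ => pow_nonneg (apply_nonneg _ _) _)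
        (fun w _ => hx₀le w)
    obtain ⟨hfinB, hcardB⟩ := hcount B hBpos (by rw [hBT]; exact hT1)
    -- the injection into the units box
    have hz : ∀ x : {x : F // x ≠ 0 ∧
        (∀ w : InfinitePlace F, (w x) ^ mult w ≤ (y w) ^ mult w) ∧
        FractionalIdeal.spanSingleton (𝓞 F)⁰ x = m}, ∃ z : (𝓞 F)ˣ, z • (x : F) = x₀ := by
      intro x
      have h1 : FractionalIdeal.spanSingleton (𝓞 F)⁰ (x : F) =
          FractionalIdeal.spanSingleton (𝓞 F)⁰ x₀ := x.2.2.2.trans hx₀span.symm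
      exact (FractionalIdeal.spanSingleton_eq_spanSingleton).mp h1
    choose zf hzf using hz
    have hkey : ∀ x, algebraMap (𝓞 F) F ((zf x : (𝓞 F)ˣ) : 𝓞 F) * (x : F) = x₀ := by
      intro x
      have := hzf x
      rwa [Units.smul_def, Algebra.smul_def] at this
    have hinv : ∀ x, algebraMap (𝓞 F) F (((zf x)⁻¹ : (𝓞 F)ˣ) : 𝓞 F) =
        (algebraMap (𝓞 F) F ((zf x : (𝓞 F)ˣ) : 𝓞 F))⁻¹ := by
      intro x
      have h1 : ((zf x : (𝓞 F)ˣ) : 𝓞 F) * (((zf x)⁻¹ : (𝓞 F)ˣ) : 𝓞 F) = 1 := by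
        rw [← Units.val_mul, mul_inv_cancel, Units.val_one]
      have h2 := congr_arg (algebraMap (𝓞 F) F) h1
      rw [map_mul, map_one] at h2
      exact eq_inv_of_mul_eq_one_right h2
    set Ψ : {x : F // x ≠ 0 ∧
        (∀ w : InfinitePlace F, (w x) ^ mult w ≤ (y w) ^ mult w) ∧
        FractionalIdeal.spanSingleton (𝓞 F)⁰ x = m} →
        {u : (𝓞 F)ˣ // ∀ w : InfinitePlace F, w (u : F) ≤ B w} := fun x =>
      ⟨(zf x)⁻¹, by
        intro w
        have hx0 : (x : F) ≠ 0 := x.2.1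
        have hxle : w (x : F) ≤ y w :=
          le_of_pow_le_pow_left₀ mult_ne_zero (hy w).le (x.2.2.1 w)
        have h1 := congr_arg w (hkey x)
        rw [map_mul] at h1
        have hzpos : 0 < w (algebraMap (𝓞 F) F ((zf x : (𝓞 F)ˣ) : 𝓞 F)) := by
          refine pos_iff.mpr (fun hcon => ?_)
          rw [hcon, map_zero, zero_mul] at h1
          exact (hx₀pos w).ne' h1.symm
        have hwx : 0 < w (x : F) := pos_iff.mpr hx0
        have h3 : (w (algebraMap (𝓞 F) F ((zf x : (𝓞 F)ˣ) : 𝓞 F)))⁻¹ = w (x : F) / w x₀ := by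
          rw [inv_eq_one_div, div_eq_div_iff hzpos.ne' (hx₀pos w).ne']
          linear_combination -h1
        rw [hinv x, map_inv₀, h3]
        exact (div_le_div_iff_of_pos_right (hx₀pos w)).mpr hxle⟩ with hΨdef
    have hΨinj : Function.Injective Ψ := by
      intro x x' h
      have h1 : ((zf x)⁻¹ : (𝓞 F)ˣ) = (zf x')⁻¹ := congr_arg Subtype.val h
      have h2 : zf x = zf x' := inv_injective h1
      have k1 := hkey x
      have k2 := hkey x'
      rw [h2] at k1
      have hne : algebraMap (𝓞 F) F ((zf x' : (𝓞 F)ˣ) : 𝓞 F) ≠ 0 := by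
        intro hcon
        rw [hcon, zero_mul] at k2
        exact hx₀ne k2.symm
      exact Subtype.ext (mul_left_cancel₀ hne (k1.trans k2.symm))
    calc (Nat.card {x : F // x ≠ 0 ∧
            (∀ w : InfinitePlace F, (w x) ^ mult w ≤ (y w) ^ mult w) ∧
            FractionalIdeal.spanSingleton (𝓞 F)⁰ x = m} : ℝ)
        ≤ (Nat.card {u : (𝓞 F)ˣ // ∀ w : InfinitePlace F, w (u : F) ≤ B w} : ℝ) := by
          exact_mod_cast Nat.card_le_card_of_injective Ψ hΨinj
      _ ≤ c * (1 + Real.log (∏ w, B w ^ mult w)) ^ r := hcardB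
      _ = c * (1 + Real.log T) ^ r := by rw [hBT]
      _ ≤ C * T ^ ε := hpoly T hT1
  · have hempty : IsEmpty {x : F // x ≠ 0 ∧
        (∀ w : InfinitePlace F, (w x) ^ mult w ≤ (y w) ^ mult w) ∧
        FractionalIdeal.spanSingleton (𝓞 F)⁰ x = m} := not_nonempty_iff.mp hS
    rw [Nat.card_of_isEmpty, Nat.cast_zero]
    exact mul_nonneg hC.le (Real.rpow_nonneg hTpos.le ε)
end

section
/- Let F be a number field with maximal totally real subfield K of index m = [F:K] ≥ 2 (so F is not totally real). There exists a constant c > 0 depending only on F with the following property: if ξ ∈ F generates F over K, satisfies |ξ_v| ≤ A and |Im ξ_v| ≤ A·√(δ_v) at every archimedean place v (with A ≥ 1, δ_v > 0), and ξ·O_F = k/l with k, l integral ideals, then ∏_{v complex} δ_v ≥ c · ((2A)^n · N(l)²)^{−2(m−1)}. In particular, if all δ_v are sufficiently small relative to A and N(l), then no such ξ generating F over K exists. -/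
open scoped Classical

open NumberField

section AuxRealnessRigidity

set_option maxHeartbeats 1000000
set_option synthInstance.maxHeartbeats 100000

open Polynomial

variable {F : Type*} [Field F] [NumberField F]


/-- restriction set -/
noncomputable def resSet (K : IntermediateField ℚ F) (φ : F →+* ℂ) : Finset (F →+* ℂ) :=
  Finset.univ.filter (fun ψ : F →+* ℂ => ψ.comp (algebraMap K F) = φ.comp (algebraMap K F))

lemma key_factorization (K : IntermediateField ℚ F) (ξ : F)
    (hgen : IntermediateField.adjoin K {ξ} = ⊤) (φ : F →+* ℂ) :
    φ (Polynomial.aeval ξ (Polynomial.derivative (minpoly K ξ))) =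
      (∏ ψ ∈ (resSet K φ).erase φ, (φ ξ - ψ ξ)) ∧
    (resSet K φ).card = Module.finrank K F := by
  letI : Algebra K ℂ := (φ.comp (algebraMap K F)).toAlgebra
  haveI : CharZero K := (RingHom.charZero_iff (algebraMap K F).injective).mpr inferInstance
  haveI : FiniteDimensional K F := FiniteDimensional.right ℚ K F
  have hint : IsIntegral K ξ := Algebra.IsIntegral.isIntegral ξ
  set P : Polynomial K := minpoly K ξ with hP
  have hsepP : P.Separable := Algebra.IsSeparable.isSeparable K ξ
  have hmonic : P.Monic := minpoly.monic hint
  set pb : PowerBasis K F :=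
    ((IntermediateField.adjoin.powerBasis hint).map
      ((IntermediateField.equivOfEq hgen).trans IntermediateField.topEquiv)) with hpb
  have hgenpb : pb.gen = ξ := rfl
  set v : (F →ₐ[K] ℂ) → ℂ := fun σ => σ ξ with hv
  set Pc : Polynomial ℂ := P.map (algebraMap K ℂ) with hPc
  have hPc_monic : Pc.Monic := hmonic.map _
  have hPc_ne : Pc ≠ 0 := hPc_monic.ne_zero
  have hroots : Pc.roots = Finset.univ.val.map v := by
    have h1 : Pc.roots.Nodup := Polynomial.nodup_roots (hsepP.map)
    have hinj : Function.Injective v := by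
      intro σ σ' h
      exact pb.algHom_ext (by rwa [hgenpb])
    have h2 : (Finset.univ.val.map v).Nodup :=
      Multiset.Nodup.map hinj Finset.univ.nodup
    rw [Multiset.Nodup.ext h1 h2]
    intro r
    constructor
    · intro hr
      have hr0 : Polynomial.eval r Pc = 0 := (Polynomial.mem_roots hPc_ne).mp hr
      have hr' : Polynomial.aeval r P = 0 := by
        rwa [hPc, Polynomial.eval_map, ← Polynomial.aeval_def] at hr0
      refine Multiset.mem_map.mpr ⟨pb.lift r (by rwa [hgenpb]), Finset.mem_val.mpr (Finset.mem_univ _), ?_⟩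
      exact pb.lift_gen r (by rwa [hgenpb])
    · intro hr
      obtain ⟨σ, _, rfl⟩ := Multiset.mem_map.mp hr
      refine (Polynomial.mem_roots hPc_ne).mpr ?_
      show Polynomial.eval (v σ) Pc = 0
      rw [hPc, Polynomial.eval_map, ← Polynomial.aeval_def, hv]
      rw [show Polynomial.aeval (σ ξ) P = σ (Polynomial.aeval ξ P) from
        Polynomial.aeval_algHom_apply σ ξ P, minpoly.aeval, map_zero]
  have hPc_eq : Pc = Lagrange.nodal Finset.univ v := by
    rw [(IsAlgClosed.splits Pc).eq_prod_roots_of_monic hPc_monic,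
      hroots, Lagrange.nodal, Finset.prod_eq_multiset_prod, Multiset.map_map]
    rfl
  -- the alg hom corresponding to φ
  set σ₀ : F →ₐ[K] ℂ := { toRingHom := φ, commutes' := fun _ => rfl } with hσ₀
  have hcard_alg : Fintype.card (F →ₐ[K] ℂ) = Module.finrank K F := by
    have h1 : Pc.natDegree = (Finset.univ : Finset (F →ₐ[K] ℂ)).card := by rw [hPc_eq, Lagrange.natDegree_nodal]
    have h2 : Pc.natDegree = P.natDegree := Polynomial.natDegree_map_eq_of_injective
      (algebraMap K ℂ).injective P
    have h3 : P.natDegree = Module.finrank K F := by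
      rw [← IntermediateField.adjoin.finrank hint, hgen, IntermediateField.finrank_top']
    rw [← Finset.card_univ, ← h1, h2, h3]
  -- bijection
  set i : (F →ₐ[K] ℂ) → (F →+* ℂ) := fun σ => (σ : F →+* ℂ) with hi
  have hmem : ∀ σ : F →ₐ[K] ℂ, i σ ∈ resSet K φ := by
    intro σ
    simp only [resSet, Finset.mem_filter, Finset.mem_univ, true_and]
    ext x
    exact σ.commutes x
  set j : (F →+* ℂ) → (F →ₐ[K] ℂ) := fun ψ =>
    if h : ψ.comp (algebraMap K F) = φ.comp (algebraMap K F) then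
      { toRingHom := ψ, commutes' := fun x => (RingHom.congr_fun h x : _) }
    else σ₀ with hj
  have hji : ∀ σ : F →ₐ[K] ℂ, j (i σ) = σ := by
    intro σ
    have h := (Finset.mem_filter.mp (hmem σ)).2
    simp only [hj, hi]
    rw [dif_pos h]
    ext x; rfl
  have hij : ∀ ψ ∈ resSet K φ, i (j ψ) = ψ := by
    intro ψ hψ
    have h := (Finset.mem_filter.mp hψ).2
    simp only [hj, hi]
    rw [dif_pos h]
    rfl
  have hcard : (resSet K φ).card = Module.finrank K F := by
    rw [← hcard_alg, ← Finset.card_univ]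
    exact Finset.card_nbij' j i (fun ψ _ => Finset.mem_univ _) (fun σ _ => hmem σ)
      hij (fun σ _ => hji σ)
  refine ⟨?_, hcard⟩
  -- now the product formula
  have e1 : φ (Polynomial.aeval ξ (Polynomial.derivative P)) =
      Polynomial.eval (σ₀ ξ) (Polynomial.derivative Pc) := by
    have t1 : φ (Polynomial.aeval ξ (Polynomial.derivative P)) =
        Polynomial.aeval (σ₀ ξ) (Polynomial.derivative P) :=
      (Polynomial.aeval_algHom_apply σ₀ ξ (Polynomial.derivative P)).symm
    rw [t1, Polynomial.aeval_def, ← Polynomial.eval_map, hPc, Polynomial.derivative_map]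
  have e2 : Polynomial.eval (v σ₀) (Polynomial.derivative (Lagrange.nodal Finset.univ v)) =
      ∏ σ ∈ Finset.univ.erase σ₀, (v σ₀ - v σ) := by
    rw [Lagrange.eval_nodal_derivative_eval_node_eq (Finset.mem_univ σ₀), Lagrange.eval_nodal]
  rw [e1, hPc_eq]
  refine Eq.trans e2 ?_
  refine Finset.prod_nbij' i j ?_ ?_ (fun σ _ => hji σ) ?_ ?_
  · intro σ hσ
    refine Finset.mem_erase.mpr ⟨?_, hmem σ⟩
    intro hc
    exact (Finset.mem_erase.mp hσ).1 (by
      apply pb.algHom_ext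
      show σ pb.gen = σ₀ pb.gen
      rw [show (σ pb.gen : ℂ) = (i σ) pb.gen from rfl, hc]; rfl)
  · intro ψ hψ
    refine Finset.mem_erase.mpr ⟨?_, Finset.mem_univ _⟩
    intro hc
    apply (Finset.mem_erase.mp hψ).1
    rw [← hij ψ (Finset.mem_erase.mp hψ).2, hc]
    rfl
  · exact fun ψ hψ => hij ψ (Finset.mem_erase.mp hψ).2
  · intro σ hσ
    show (σ₀ ξ - σ ξ) = (φ ξ - (i σ) ξ)
    rfl


lemma norm_prod_embeddings (x : F) :
    (algebraMap ℚ ℂ) (Algebra.norm ℚ x) = ∏ φ : F →+* ℂ, φ x := by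
  rw [Algebra.norm_eq_prod_embeddings ℚ ℂ x]
  exact Fintype.prod_equiv (RingHom.equivRatAlgHom F ℂ).symm _ _ (fun φ => rfl)

lemma ringhom_integral (φ : F →+* ℂ) {x : F} (hx : IsIntegral ℤ x) :
    IsIntegral ℤ (φ x) := IsIntegral.map φ.toIntAlgHom hx

lemma one_le_abs_of_nonzero_integer {q : ℚ} (hq : q ≠ 0) (hint : IsIntegral ℤ ((q : ℂ))) :
    (1 : ℝ) ≤ |(q : ℝ)| := by
  have h1 : IsIntegral ℤ q := by
    have := (isIntegral_algHom_iff ((algebraMap ℚ ℂ).toIntAlgHom)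
      (algebraMap ℚ ℂ).injective).mp (by exact_mod_cast hint)
    exact this
  obtain ⟨z, hz⟩ := IsIntegrallyClosed.isIntegral_iff.mp h1
  have hz0 : z ≠ 0 := by rintro rfl; simp at hz; exact hq hz.symm
  have : (1 : ℚ) ≤ |q| := by
    rw [← hz]
    have : (1 : ℤ) ≤ |z| := Int.one_le_abs (by exact_mod_cast hz0)
    calc (1:ℚ) = ((1:ℤ):ℚ) := by norm_num
    _ ≤ ((|z|:ℤ):ℚ) := by exact_mod_cast this
    _ = |algebraMap ℤ ℚ z| := by push_cast [algebraMap_int_eq]; simp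
  calc (1:ℝ) = ((1:ℚ):ℝ) := by norm_num
  _ ≤ ((|q|:ℚ):ℝ) := by exact_mod_cast this
  _ = |(q:ℝ)| := by push_cast; ring

lemma resSet_symm (K : IntermediateField ℚ F) (φ ψ : F →+* ℂ) :
    ψ ∈ (resSet K φ).erase φ ↔ φ ∈ (resSet K ψ).erase ψ := by
  simp only [resSet, Finset.mem_erase, Finset.mem_filter, Finset.mem_univ, true_and]
  constructor
  · rintro ⟨h1, h2⟩; exact ⟨h1.symm, h2.symm⟩
  · rintro ⟨h1, h2⟩; exact ⟨h1.symm, h2.symm⟩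

lemma big_identity (K : IntermediateField ℚ F) (ξ α : F)
    (hgen : IntermediateField.adjoin K {ξ} = ⊤) :
    (algebraMap ℚ ℂ) (Algebra.norm ℚ (Polynomial.aeval ξ (Polynomial.derivative (minpoly K ξ)))
        * (Algebra.norm ℚ α) ^ (2 * (Module.finrank K F - 1))) =
      ∏ p ∈ Finset.univ.sigma (fun φ : F →+* ℂ => (resSet K φ).erase φ),
        (p.1 (ξ * α) * p.2 α - p.2 (ξ * α) * p.1 α) := by
  set m := Module.finrank K F with hm
  have hcard' : ∀ φ : F →+* ℂ, ((resSet K φ).erase φ).card = m - 1 := by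
    intro φ
    rw [Finset.card_erase_of_mem, (key_factorization K ξ hgen φ).2]
    simp [resSet]
  rw [map_mul, map_pow, norm_prod_embeddings, norm_prod_embeddings, Finset.prod_sigma]
  calc (∏ φ : F →+* ℂ, φ (Polynomial.aeval ξ (Polynomial.derivative (minpoly K ξ))))
        * (∏ φ : F →+* ℂ, φ α) ^ (2*(m-1))
      = (∏ φ : F →+* ℂ, ∏ ψ ∈ (resSet K φ).erase φ, (φ ξ - ψ ξ))
        * ((∏ φ : F →+* ℂ, φ α) ^ (m-1) * (∏ φ : F →+* ℂ, φ α) ^ (m-1)) := by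
        rw [Finset.prod_congr rfl (fun φ _ => (key_factorization K ξ hgen φ).1)]
        congr 1
        rw [← pow_add]
        congr 1
        omega
    _ = (∏ φ : F →+* ℂ, ∏ ψ ∈ (resSet K φ).erase φ, (φ ξ - ψ ξ))
        * ((∏ φ : F →+* ℂ, ∏ ψ ∈ (resSet K φ).erase φ, φ α)
          * (∏ φ : F →+* ℂ, ∏ ψ ∈ (resSet K φ).erase φ, ψ α)) := by
        congr 1
        congr 1
        · rw [← Finset.prod_pow]
          refine Finset.prod_congr rfl (fun φ _ => ?_)
          rw [Finset.prod_const, hcard' φ]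
        · rw [Finset.prod_comm' (t' := Finset.univ)
            (s' := fun ψ => (resSet K ψ).erase ψ) (fun φ ψ => by
              simp only [Finset.mem_univ, true_and, and_true]
              exact resSet_symm K φ ψ)]
          rw [← Finset.prod_pow]
          refine Finset.prod_congr rfl (fun ψ _ => ?_)
          rw [Finset.prod_const, hcard' ψ]
    _ = ∏ φ : F →+* ℂ, ∏ ψ ∈ (resSet K φ).erase φ, ((φ ξ - ψ ξ) * (φ α * ψ α)) := by
        rw [← Finset.prod_mul_distrib, ← Finset.prod_mul_distrib]
        refine Finset.prod_congr rfl (fun φ _ => ?_)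
        rw [← Finset.prod_mul_distrib, ← Finset.prod_mul_distrib]
    _ = ∏ φ : F →+* ℂ, ∏ ψ ∈ (resSet K φ).erase φ,
          (φ (ξ * α) * ψ α - ψ (ξ * α) * φ α) := by
        refine Finset.prod_congr rfl (fun φ _ => Finset.prod_congr rfl (fun ψ _ => ?_))
        rw [map_mul, map_mul]
        ring

end AuxRealnessRigidity

set_option maxHeartbeats 1000000
set_option synthInstance.maxHeartbeats 100000

open Polynomial in
/-- (Contrapositive form of realness rigidity.) Let `F` be a number field
that is not totally real, with maximal totally real subfield `K` and `m = [F : K] ≥ 2`.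
There is a constant `c > 0` depending only on `F` such that whenever `ξ ∈ F` generates `F`
over `K`, satisfies `|ξ_v| ≤ A` and `|Im ξ_v| ≤ A √(δ_v)` at every archimedean place `v`
(with `A ≥ 1`, `δ_v > 0`), and `ξ·𝓞_F = 𝔨/𝔩` with integral ideals, then
`∏_{v complex} δ_v ≥ c · ((2A)^n · N(𝔩)²)^{-2(m-1)}`. -/
theorem realness_rigidity_contrapositive
    (F : Type*) [Field F] [NumberField F]
    (K : IntermediateField ℚ F)
    (hK : ∀ x : F, x ∈ K ↔ ∀ φ : F →+* ℂ, (φ x).im = 0)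
    (hm : 2 ≤ Module.finrank K F) :
    ∃ c : ℝ, 0 < c ∧
      ∀ (ξ : F), IntermediateField.adjoin K {ξ} = ⊤ →
      ∀ (k l : Ideal (𝓞 F)), l ≠ 0 →
        FractionalIdeal.spanSingleton (nonZeroDivisors (𝓞 F)) ξ *
            (l : FractionalIdeal (nonZeroDivisors (𝓞 F)) F) =
          (k : FractionalIdeal (nonZeroDivisors (𝓞 F)) F) →
      ∀ (A : ℝ), 1 ≤ A → ∀ (δ : InfinitePlace F → ℝ), (∀ v, 0 < δ v) →
        (∀ v : InfinitePlace F,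
          ‖v.embedding ξ‖ ≤ A ∧ |(v.embedding ξ).im| ≤ A * Real.sqrt (δ v)) →
        c * (((2 * A) ^ (Module.finrank ℚ F) * (Ideal.absNorm l : ℝ) ^ 2) ^
              (2 * (Module.finrank K F - 1)))⁻¹ ≤
          ∏ v ∈ Finset.univ.filter (fun v : InfinitePlace F => ¬ v.IsReal), δ v := by
  classical
  set CM : ℝ := (4 / Real.pi) ^ NumberField.InfinitePlace.nrComplexPlaces F *
      (Nat.factorial (Module.finrank ℚ F)) / (Module.finrank ℚ F) ^ (Module.finrank ℚ F) *
      Real.sqrt |(NumberField.discr F : ℝ)| with hCM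
  set C : ℝ := max 1 CM with hC
  have hC1 : (1:ℝ) ≤ C := le_max_left 1 CM
  have hCpos : (0:ℝ) < C := lt_of_lt_of_le one_pos hC1
  set n := Module.finrank ℚ F with hn
  set m := Module.finrank K F with hmdef
  set e := m - 1 with he
  refine ⟨(C ^ (2 * e))⁻¹, by positivity, ?_⟩
  intro ξ hgen k l hl hkl A hA δ hδ hbound
  -- Minkowski element
  have hlne : (l : FractionalIdeal (nonZeroDivisors (𝓞 F)) F) ≠ 0 := by
    simpa using hl
  obtain ⟨α, hαmem, hα0, hαn⟩ :=
    NumberField.exists_ne_zero_mem_ideal_of_norm_le_mul_sqrt_discr F (Units.mk0 _ hlne)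
  set N : ℝ := (Ideal.absNorm l : ℝ) with hN
  have hN1 : (1:ℝ) ≤ N := by
    have h0 : Ideal.absNorm l ≠ 0 := by
      rw [ne_eq, Ideal.absNorm_eq_zero_iff]; exact hl
    rw [hN]
    exact_mod_cast Nat.one_le_iff_ne_zero.mpr h0
  have hNpos : (0:ℝ) < N := lt_of_lt_of_le one_pos hN1
  have hYle : ((|Algebra.norm ℚ α| : ℚ) : ℝ) ≤ N * C := by
    refine le_trans hαn ?_
    have h1 : (FractionalIdeal.absNorm ((Units.mk0 _ hlne :
        (FractionalIdeal (nonZeroDivisors (𝓞 F)) F)ˣ) : FractionalIdeal (nonZeroDivisors (𝓞 F)) F) : ℝ)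
        = N := by
      rw [Units.val_mk0, FractionalIdeal.coeIdeal_absNorm]
      push_cast; rfl
    rw [h1]
    calc N * (4 / Real.pi) ^ NumberField.InfinitePlace.nrComplexPlaces F *
          (Nat.factorial n) / (n : ℝ) ^ n * Real.sqrt |(NumberField.discr F : ℝ)|
        = N * CM := by rw [hCM]; ring
      _ ≤ N * C := by
        have : CM ≤ C := le_max_right 1 CM
        exact mul_le_mul_of_nonneg_left this (le_of_lt hNpos)
  -- integrality of α and ξ·α
  have hαmem' : α ∈ (l : FractionalIdeal (nonZeroDivisors (𝓞 F)) F) := hαmem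
  have hαint : IsIntegral ℤ α := by
    obtain ⟨a, ha, rfl⟩ := (FractionalIdeal.mem_coeIdeal _).mp hαmem'
    exact RingOfIntegers.isIntegral_coe a
  have hξαint : IsIntegral ℤ (ξ * α) := by
    have h1 : ξ * α ∈ (k : FractionalIdeal (nonZeroDivisors (𝓞 F)) F) := by
      rw [← hkl]
      exact FractionalIdeal.mul_mem_mul (FractionalIdeal.mem_spanSingleton_self _ ξ) hαmem'
    obtain ⟨a, ha, h2⟩ := (FractionalIdeal.mem_coeIdeal _).mp h1
    rw [← h2]; exact RingOfIntegers.isIntegral_coe a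
  set P' : F := Polynomial.aeval ξ (Polynomial.derivative (minpoly K ξ)) with hP'
  have hder : P' ≠ 0 := by
    haveI : FiniteDimensional K F := FiniteDimensional.right ℚ K F
    haveI : CharZero K := (RingHom.charZero_iff (algebraMap K F).injective).mpr inferInstance
    have hsep : (minpoly K ξ).Separable := Algebra.IsSeparable.isSeparable K ξ
    obtain ⟨u, w, huw⟩ := hsep
    intro h0
    have h1 : Polynomial.aeval ξ u * Polynomial.aeval ξ (minpoly K ξ)
        + Polynomial.aeval ξ w * P' = 1 := by
      have h2 := congrArg (Polynomial.aeval ξ) huw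
      simpa [hP'] using h2
    rw [minpoly.aeval, mul_zero, zero_add, h0, mul_zero] at h1
    exact zero_ne_one h1
  set M : ℚ := Algebra.norm ℚ P' * (Algebra.norm ℚ α) ^ (2 * e) with hM
  have hM0 : M ≠ 0 := mul_ne_zero (by rw [Algebra.norm_ne_zero_iff]; exact hder)
      (pow_ne_zero _ (by rw [Algebra.norm_ne_zero_iff]; exact hα0))
  set T := Finset.univ.sigma (fun φ : F →+* ℂ => (resSet K φ).erase φ) with hT
  set X := ∏ p ∈ T, ‖p.1 ξ - p.2 ξ‖ with hX
  set Y := ((|Algebra.norm ℚ α| : ℚ) : ℝ) with hYdef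
  have hY0' : (0:ℝ) ≤ Y := by rw [hYdef]; exact_mod_cast abs_nonneg _
  have hhcast : ∀ q : ℚ, ‖(algebraMap ℚ ℂ) q‖ = ((|q| : ℚ) : ℝ) := by
    intro q
    rw [eq_ratCast (algebraMap ℚ ℂ) q,
      show ((q : ℂ)) = (((q : ℝ) : ℂ)) by push_cast; ring, Complex.norm_real, Real.norm_eq_abs]
    push_cast
    ring
  -- Step 1 : the arithmetic core
  have hXY : (1:ℝ) ≤ X * Y ^ (2 * e) := by
    have hMeq : (algebraMap ℚ ℂ) M =
        ∏ p ∈ T, (p.1 (ξ * α) * p.2 α - p.2 (ξ * α) * p.1 α) := by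
      rw [hM, hP', he, hmdef, hT]
      exact big_identity K ξ α hgen
    have hint : IsIntegral ℤ ((M : ℚ) : ℂ) := by
      rw [← eq_ratCast (algebraMap ℚ ℂ) M, hMeq]
      have hmem : (∏ p ∈ T, (p.1 (ξ * α) * p.2 α - p.2 (ξ * α) * p.1 α))
          ∈ integralClosure ℤ ℂ := by
        refine Subalgebra.prod_mem _ (fun p _ => ?_)
        refine Subalgebra.sub_mem _ (Subalgebra.mul_mem _ ?_ ?_) (Subalgebra.mul_mem _ ?_ ?_)
        · exact (mem_integralClosure_iff ℤ ℂ).mpr (ringhom_integral _ hξαint)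
        · exact (mem_integralClosure_iff ℤ ℂ).mpr (ringhom_integral _ hαint)
        · exact (mem_integralClosure_iff ℤ ℂ).mpr (ringhom_integral _ hξαint)
        · exact (mem_integralClosure_iff ℤ ℂ).mpr (ringhom_integral _ hαint)
      exact (mem_integralClosure_iff ℤ ℂ).mp hmem
    have h1 : (1:ℝ) ≤ |(M : ℝ)| := one_le_abs_of_nonzero_integer hM0 hint
    have habsNP' : ‖(algebraMap ℚ ℂ) (Algebra.norm ℚ P')‖ = X := by
      rw [norm_prod_embeddings, norm_prod, hX, hT, Finset.prod_sigma]
      refine Finset.prod_congr rfl (fun φ _ => ?_)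
      rw [hP', (key_factorization K ξ hgen φ).1, norm_prod]
    have h2 : |(M : ℝ)| = X * Y ^ (2 * e) := by
      have h3 : |(M : ℝ)| = ((|M| : ℚ) : ℝ) := by push_cast; ring
      rw [h3, ← hhcast M, hM, map_mul, map_pow, norm_mul, norm_pow,
        habsNP', hhcast]
    rwa [h2] at h1
  -- Step 2 : splitting off the conjugate pairs
  set Vc := Finset.univ.filter (fun v : InfinitePlace F => ¬ v.IsReal) with hVc
  set cj := fun v : InfinitePlace F =>
    NumberField.ComplexEmbedding.conjugate v.embedding with hcj
  set T0 : Finset ((_ : F →+* ℂ) × (F →+* ℂ)) := Vc.biUnion (fun v =>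
      {⟨v.embedding, cj v⟩, ⟨cj v, v.embedding⟩}) with hT0
  have hcjne : ∀ v ∈ Vc, cj v ≠ v.embedding := by
    intro v hv
    rw [hVc, Finset.mem_filter] at hv
    intro hcontra
    exact hv.2 (NumberField.InfinitePlace.isReal_iff.mpr
      (NumberField.ComplexEmbedding.isReal_iff.mpr hcontra))
  have hcjres : ∀ v : InfinitePlace F,
      (cj v).comp (algebraMap K F) = v.embedding.comp (algebraMap K F) := by
    intro v
    ext x
    show cj v (algebraMap K F x) = v.embedding (algebraMap K F x)
    rw [hcj]
    rw [NumberField.ComplexEmbedding.conjugate_coe_eq]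
    exact Complex.conj_eq_iff_im.mpr ((hK _).mp x.2 v.embedding)
  have hmemT : ∀ (φ ψ : F →+* ℂ), ψ.comp (algebraMap K F) = φ.comp (algebraMap K F) → ψ ≠ φ →
      (⟨φ, ψ⟩ : (_ : F →+* ℂ) × (F →+* ℂ)) ∈ T := by
    intro φ ψ h1 h2
    rw [hT, Finset.mem_sigma]
    exact ⟨Finset.mem_univ _, Finset.mem_erase.mpr ⟨h2, by simp [resSet, h1]⟩⟩
  have hT0T : T0 ⊆ T := by
    intro p hp
    rw [hT0, Finset.mem_biUnion] at hp
    obtain ⟨v, hv, hp⟩ := hp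
    rcases Finset.mem_insert.mp hp with h | h
    · rw [h]; exact hmemT _ _ (hcjres v) (hcjne v hv)
    · rw [Finset.mem_singleton] at h
      rw [h]
      exact hmemT _ _ (hcjres v).symm (fun hcon => hcjne v hv hcon.symm)
  have hmkfst : ∀ v : InfinitePlace F,
      ∀ p ∈ ({⟨v.embedding, cj v⟩, ⟨cj v, v.embedding⟩} :
        Finset ((_ : F →+* ℂ) × (F →+* ℂ))),
      NumberField.InfinitePlace.mk p.1 = v := by
    intro v p hp
    rcases Finset.mem_insert.mp hp with h | h
    · rw [h]; exact NumberField.InfinitePlace.mk_embedding v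
    · rw [Finset.mem_singleton] at h
      rw [h]
      show NumberField.InfinitePlace.mk (cj v) = v
      rw [hcj]
      rw [NumberField.InfinitePlace.mk_conjugate_eq, NumberField.InfinitePlace.mk_embedding]
  have hdisj : (↑Vc : Set (InfinitePlace F)).PairwiseDisjoint (fun v =>
      ({⟨v.embedding, cj v⟩, ⟨cj v, v.embedding⟩} :
        Finset ((_ : F →+* ℂ) × (F →+* ℂ)))) := by
    intro v _ w _ hvw
    rw [Function.onFun, Finset.disjoint_left]
    intro p hpv hpw
    exact hvw ((hmkfst v p hpv).symm.trans (hmkfst w p hpw))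
  have habs2 : ∀ z : ℂ, ‖z - (starRingEnd ℂ) z‖ = 2 * |z.im| := by
    intro z
    rw [Complex.sub_conj, norm_mul, Complex.norm_I, mul_one, Complex.norm_real, Real.norm_eq_abs, abs_mul]
    norm_num
  have hprodT0 : ∏ p ∈ T0, ‖p.1 ξ - p.2 ξ‖
      = ∏ v ∈ Vc, (2 * |(v.embedding ξ).im|) ^ 2 := by
    rw [hT0, Finset.prod_biUnion hdisj]
    refine Finset.prod_congr rfl (fun v hv => ?_)
    have hne : (⟨v.embedding, cj v⟩ : (_ : F →+* ℂ) × (F →+* ℂ)) ≠ ⟨cj v, v.embedding⟩ := by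
      intro h
      exact hcjne v hv (congrArg Sigma.fst h).symm
    rw [Finset.prod_pair hne]
    show ‖v.embedding ξ - cj v ξ‖ * ‖cj v ξ - v.embedding ξ‖ = _
    have h1 : cj v ξ = (starRingEnd ℂ) (v.embedding ξ) := rfl
    rw [h1, show (starRingEnd ℂ) (v.embedding ξ) - v.embedding ξ
        = -(v.embedding ξ - (starRingEnd ℂ) (v.embedding ξ)) by ring, norm_neg, habs2]
    ring
  have habsφ : ∀ φ : F →+* ℂ, ‖φ ξ‖ ≤ A := by
    intro φ
    rcases NumberField.InfinitePlace.embedding_mk_eq φ with h | h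
    · have := (hbound (NumberField.InfinitePlace.mk φ)).1
      rwa [h] at this
    · have := (hbound (NumberField.InfinitePlace.mk φ)).1
      rw [h] at this
      rwa [NumberField.ComplexEmbedding.conjugate_coe_eq, Complex.norm_conj] at this
  have hfbound : ∀ p ∈ T \ T0, ‖p.1 ξ - p.2 ξ‖ ≤ 2 * A := by
    intro p _
    have h1 := norm_sub_le (p.1 ξ) (p.2 ξ)
    calc ‖p.1 ξ - p.2 ξ‖ ≤ ‖p.1 ξ‖ + ‖p.2 ξ‖ := h1
    _ ≤ A + A := add_le_add (habsφ _) (habsφ _)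
    _ = 2 * A := by ring
  have hcardres : ∀ φ : F →+* ℂ, ((resSet K φ).erase φ).card = e := by
    intro φ
    rw [Finset.card_erase_of_mem (by simp [resSet]), (key_factorization K ξ hgen φ).2, ← hmdef, he]
  have hcardT : T.card = n * e := by
    rw [hT, Finset.card_sigma, Finset.sum_congr rfl (fun φ _ => hcardres φ),
      Finset.sum_const, Finset.card_univ, NumberField.Embeddings.card F ℂ, smul_eq_mul, hn]
  have h2A1 : (1:ℝ) ≤ 2 * A := by linarith
  have hrest : ∏ p ∈ T \ T0, ‖p.1 ξ - p.2 ξ‖ ≤ (2*A) ^ (n*e) := by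
    calc ∏ p ∈ T \ T0, ‖p.1 ξ - p.2 ξ‖ ≤ ∏ _p ∈ T \ T0, (2*A) :=
        Finset.prod_le_prod (fun p _ => norm_nonneg _) hfbound
    _ = (2*A) ^ (T \ T0).card := Finset.prod_const _
    _ ≤ (2*A) ^ (n*e) := pow_le_pow_right₀ h2A1
        (le_trans (Finset.card_le_card Finset.sdiff_subset) hcardT.le)
  set P2 := ∏ v ∈ Vc, (2 * |(v.embedding ξ).im|) ^ 2 with hP2
  have hP20 : (0:ℝ) ≤ P2 := Finset.prod_nonneg (fun v _ => by positivity)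
  have hXr0 : (0:ℝ) ≤ ∏ p ∈ T \ T0, ‖p.1 ξ - p.2 ξ‖ :=
    Finset.prod_nonneg (fun p _ => (norm_nonneg _))
  have hXeq : X = P2 * ∏ p ∈ T \ T0, ‖p.1 ξ - p.2 ξ‖ := by
    rw [hX, ← Finset.prod_sdiff hT0T, hprodT0]
    ring
  -- Step 3 : place inequalities
  have hδv : ∀ v ∈ Vc, (2 * |(v.embedding ξ).im|)^2 / (2*A)^2 ≤ δ v := by
    intro v _
    rw [div_le_iff₀ (by positivity)]
    have h2 := (hbound v).2
    have h4 : Real.sqrt (δ v) ^ 2 = δ v := Real.sq_sqrt (hδ v).le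
    nlinarith [abs_nonneg (v.embedding ξ).im, sq_abs (v.embedding ξ).im,
      Real.sqrt_nonneg (δ v), hδ v, hA]
  have hδprod : P2 / (2*A) ^ (2 * Vc.card) ≤ ∏ v ∈ Vc, δ v := by
    have hstep : P2 / (2*A) ^ (2 * Vc.card)
        = ∏ v ∈ Vc, ((2 * |(v.embedding ξ).im|)^2 / (2*A)^2) := by
      rw [Finset.prod_div_distrib, Finset.prod_const, ← pow_mul, hP2]
    rw [hstep]
    exact Finset.prod_le_prod (fun v _ => by positivity) hδv
  have hme : 1 ≤ e := by omega
  have h2r2n : 2 * Vc.card ≤ n := by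
    have hcVc : Vc.card = NumberField.InfinitePlace.nrComplexPlaces F := by
      rw [NumberField.InfinitePlace.nrComplexPlaces, Fintype.card_subtype, hVc]
      congr 1
      ext v
      simp [NumberField.InfinitePlace.not_isReal_iff_isComplex]
    have hrank := NumberField.InfinitePlace.card_add_two_mul_card_eq_rank F
    rw [← hn] at hrank
    omega
  -- Step 4 : final assembly
  have hD : (0:ℝ) < (2*A)^(n*e) * (N*C)^(2*e) := by positivity
  have hP2ge : 1 / ((2*A)^(n*e) * (N*C)^(2*e)) ≤ P2 := by
    rw [div_le_iff₀ hD]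
    calc (1:ℝ) ≤ X * Y ^ (2*e) := hXY
    _ = P2 * ((∏ p ∈ T \ T0, ‖p.1 ξ - p.2 ξ‖) * Y^(2*e)) := by
        rw [hXeq]; ring
    _ ≤ P2 * ((2*A)^(n*e) * (N*C)^(2*e)) := by
        refine mul_le_mul_of_nonneg_left ?_ hP20
        refine mul_le_mul hrest (pow_le_pow_left₀ hY0' ?_ _) (by positivity) (by positivity)
        rw [hYdef]
        exact hYle
  have hcomp : (2*A)^(n*e) * (N*C)^(2*e) * (2*A)^(2*Vc.card)
      ≤ C^(2*e) * (((2*A)^n * N^2)^(2*e)) := by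
    have h1 : (2*A)^(n*e) * (N*C)^(2*e) * (2*A)^(2*Vc.card)
        = C^(2*e) * ((2*A)^(n*e + 2*Vc.card) * N^(2*e)) := by
      rw [mul_pow, pow_add]; ring
    have h2 : C^(2*e) * (((2*A)^n * N^2)^(2*e)) = C^(2*e) * ((2*A)^(n*(2*e)) * N^(2*(2*e))) := by
      rw [mul_pow, ← pow_mul, ← pow_mul]
    rw [h1, h2]
    have e1 : n*e + 2*Vc.card ≤ n*(2*e) := by nlinarith [h2r2n, hme]
    have e2 : 2*e ≤ 2*(2*e) := by omega
    gcongr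
    all_goals first | exact h2A1 | exact hN1 | exact e1 | exact e2
  have hA2A0 : (0:ℝ) < (2*A)^(2*Vc.card) := by positivity
  calc (C ^ (2 * e))⁻¹ * (((2*A)^n * N^2)^(2*e))⁻¹
      = (C^(2*e) * (((2*A)^n * N^2)^(2*e)))⁻¹ := (mul_inv _ _).symm
    _ ≤ ((2*A)^(n*e) * (N*C)^(2*e) * (2*A)^(2*Vc.card))⁻¹ := by
        apply inv_anti₀ (by positivity) hcomp
    _ = (1 / ((2*A)^(n*e) * (N*C)^(2*e))) / (2*A)^(2*Vc.card) := by
        rw [one_div, div_eq_mul_inv, ← mul_inv]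
    _ ≤ P2 / (2*A)^(2*Vc.card) := by
        gcongr
    _ ≤ ∏ v ∈ Vc, δ v := hδprod
end

section
/- Let F be a number field of degree n, and let Λ be a lattice in a 2n-dimensional real Euclidean space M that is invariant under a ring action of O_F on M by linear isometry-bounded maps, in the following sense: Λ = O_F·Q + O_F·Q' need not hold, but Λ is stable under multiplication by O_F, and there is a constant C (depending only on a Z-basis u_1,…,u_n of O_F and the operator norms of the u_i actions) such that ‖u·w‖ ≤ C‖w‖ for all u in the fixed basis and w ∈ M. Then the successive minima m_1 ≤ m_2 ≤ … ≤ m_{2n} of Λ satisfy m_n ≤ C'·m_1 and m_{2n} ≤ C'·m_{n+1} for a constant C' depending only on C and n. -/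
open NumberField

/-- The `k`-th successive minimum of a lattice `Λ` in a real normed space: the infimum of
the radii `r ≥ 0` such that `Λ` contains `k` linearly independent vectors of norm `≤ r`. -/
noncomputable def succMin {E : Type*} [NormedAddCommGroup E] [NormedSpace ℝ E]
    (Λ : Submodule ℤ E) (k : ℕ) : ℝ :=
  sInf {r : ℝ | 0 ≤ r ∧ ∃ s : Finset E, ↑s ⊆ (Λ : Set E) ∧
    LinearIndependent ℝ (fun x : s => (x : E)) ∧ s.card = k ∧ ∀ x ∈ s, ‖x‖ ≤ r}


section Aux

open Submodule Module

/-- A finite family of lattice vectors that is `ℤ`-linearly independent is `ℝ`-linearly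
independent, because the `ℤ`-span is a discrete subgroup hence a lattice in its real span. -/
lemma aux_li_real_of_li_int {E : Type*} [NormedAddCommGroup E] [NormedSpace ℝ E]
    [FiniteDimensional ℝ E] {Λ : Submodule ℤ E} [DiscreteTopology Λ]
    {ι : Type*} [Fintype ι] {w : ι → E} (hmem : ∀ i, w i ∈ Λ)
    (hli : LinearIndependent ℤ w) : LinearIndependent ℝ w := by
  classical
  set V : Submodule ℝ E := span ℝ (Set.range w) with hV
  let f : V →ₗ[ℤ] E := V.subtype.restrictScalars ℤ
  let L₀ : Submodule ℤ V := Λ.comap f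
  have hdisc : DiscreteTopology L₀ :=
    DiscreteTopology.preimage_of_continuous_injective (Λ : Set E)
      (LinearMap.continuous_of_finiteDimensional _) (injective_subtype V)
  let w' : ι → V := fun i => ⟨w i, subset_span ⟨i, rfl⟩⟩
  have hmem' : ∀ i, w' i ∈ L₀ := fun i => Submodule.mem_comap.mpr (hmem i)
  have hli' : LinearIndependent ℤ w' :=
    LinearIndependent.of_comp f (show LinearIndependent ℤ (f ∘ w') from hli)
  have hspan : span ℝ (Set.range w') = (⊤ : Submodule ℝ V) := by
    apply Submodule.map_injective_of_injective (injective_subtype V)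
    have himg : V.subtype '' Set.range w' = Set.range w := by
      rw [← Set.range_comp]; rfl
    rw [Submodule.map_span, Submodule.map_top, range_subtype, himg]
  have hzl : IsZLattice ℝ L₀ := ⟨by
    rw [eq_top_iff, ← hspan]
    exact span_mono (by rintro x ⟨i, rfl⟩; exact hmem' i)⟩
  have hfin : Module.Finite ℤ L₀ := ZLattice.module_finite ℝ L₀
  have hrank : finrank ℤ L₀ = finrank ℝ V := ZLattice.rank ℝ L₀
  let w'' : ι → L₀ := fun i => ⟨w' i, hmem' i⟩
  have hli'' : LinearIndependent ℤ w'' :=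
    LinearIndependent.of_comp L₀.subtype (show LinearIndependent ℤ (L₀.subtype ∘ w'') from hli')
  have hcard : Fintype.card ι ≤ finrank ℝ V := hrank ▸ hli''.fintype_card_le_finrank
  rw [linearIndependent_iff_card_eq_finrank_span]
  exact le_antisymm hcard (finrank_range_le_card w)

lemma aux_mem {E : Type*} [NormedAddCommGroup E] [NormedSpace ℝ E]
    (Λ : Submodule ℤ E) {k : ℕ} {ι : Type*} [Fintype ι] (g : ι → E)
    (hcard : Fintype.card ι = k) (hmem : ∀ i, g i ∈ Λ) (hli : LinearIndependent ℝ g)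
    {r : ℝ} (hr : 0 ≤ r) (hnorm : ∀ i, ‖g i‖ ≤ r) :
    r ∈ {r : ℝ | 0 ≤ r ∧ ∃ s : Finset E, ↑s ⊆ (Λ : Set E) ∧
      LinearIndependent ℝ (fun x : s => (x : E)) ∧ s.card = k ∧ ∀ x ∈ s, ‖x‖ ≤ r} := by
  classical
  refine ⟨hr, Finset.image g Finset.univ, ?_, ?_, ?_, ?_⟩
  · intro x hx
    simp only [Finset.coe_image, Finset.coe_univ, Set.image_univ] at hx
    obtain ⟨i, rfl⟩ := hx
    exact hmem i
  · have h2 : LinearIndependent ℝ (fun x : (Set.range g) => (x : E)) :=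
      (linearIndepOn_id_range_iff hli.injective).mpr hli
    have h1 : ((Finset.image g Finset.univ : Finset E) : Set E) = Set.range g := by
      simp
    have h3 : LinearIndependent ℝ
        (fun x : ((Finset.image g Finset.univ : Finset E) : Set E) => (x : E)) := by
      rw [h1]; exact h2
    exact h3
  · rw [Finset.card_image_of_injective Finset.univ hli.injective, Finset.card_univ, hcard]
  · intro x hx
    simp only [Finset.mem_image, Finset.mem_univ, true_and] at hx
    obtain ⟨i, rfl⟩ := hx
    exact hnorm i

lemma aux_succMin_le {E : Type*} [NormedAddCommGroup E] [NormedSpace ℝ E]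
    (Λ : Submodule ℤ E) {k : ℕ} {ι : Type*} [Fintype ι] (g : ι → E)
    (hcard : Fintype.card ι = k) (hmem : ∀ i, g i ∈ Λ) (hli : LinearIndependent ℝ g)
    {r : ℝ} (hr : 0 ≤ r) (hnorm : ∀ i, ‖g i‖ ≤ r) :
    succMin Λ k ≤ r :=
  csInf_le ⟨0, fun _ hx => hx.1⟩ (aux_mem Λ g hcard hmem hli hr hnorm)

lemma aux_sum_smul {F : Type} [Field F] [NumberField F] {E : Type} [AddCommGroup E]
    [Module F E] {n : ℕ} (b : Basis (Fin n) ℤ (𝓞 F)) (c : Fin n → ℤ) (x : E) :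
    ∑ i, c i • ((algebraMap (𝓞 F) F (b i)) • x)
      = (algebraMap (𝓞 F) F (∑ i, c i • b i)) • x := by
  rw [map_sum, Finset.sum_smul]
  refine Finset.sum_congr rfl fun i _ => ?_
  rw [map_zsmul, smul_assoc]
/-- If `x ≠ 0` then the vectors `b i • x` are `ℤ`-linearly independent. -/
lemma aux_li_single {F : Type} [Field F] [NumberField F] {E : Type} [AddCommGroup E]
    [Module F E] {n : ℕ} (b : Basis (Fin n) ℤ (𝓞 F)) {x : E} (hx : x ≠ 0) :
    LinearIndependent ℤ (fun i : Fin n => (algebraMap (𝓞 F) F (b i)) • x) := by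
  rw [Fintype.linearIndependent_iff]
  intro c hc
  rw [aux_sum_smul] at hc
  rcases smul_eq_zero.mp hc with h | h
  · exact Fintype.linearIndependent_iff.mp b.linearIndependent c
      ((map_eq_zero_iff _ RingOfIntegers.coe_injective).mp h)
  · exact absurd h hx

/-- Among `n+1` really independent vectors of `s` there are two whose `𝓞 F`-multiples by the
basis give `2n` `ℤ`-independent vectors. -/
lemma aux_exists_pair {F : Type} [Field F] [NumberField F] {E : Type} [NormedAddCommGroup E]
    [InnerProductSpace ℝ E] [Module F E] [SMulCommClass F ℝ E] {n : ℕ} (hn : 0 < n)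
    (b : Basis (Fin n) ℤ (𝓞 F)) (s : Finset E)
    (hli : LinearIndependent ℝ (fun x : s => (x : E))) (hcard : s.card = n + 1) :
    ∃ x ∈ s, ∃ y ∈ s, LinearIndependent ℤ
      (Sum.elim (fun i : Fin n => (algebraMap (𝓞 F) F (b i)) • x)
        (fun i : Fin n => (algebraMap (𝓞 F) F (b i)) • y)) := by
  classical
  by_contra hcon
  push_neg at hcon
  have hne0 : ∀ x ∈ s, x ≠ (0 : E) := fun x hx => hli.ne_zero ⟨x, hx⟩
  have hs0 : s.Nonempty := Finset.card_pos.mp (by omega)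
  obtain ⟨x₀, hx₀⟩ := hs0
  have hx₀0 : x₀ ≠ 0 := hne0 x₀ hx₀
  -- pairwise dependence over 𝓞 F
  have hpair : ∀ y ∈ s, ∃ u v : 𝓞 F, v ≠ 0 ∧
      (algebraMap (𝓞 F) F v) • y = (algebraMap (𝓞 F) F u) • x₀ := by
    intro y hy
    have h := hcon x₀ hx₀ y hy
    rw [Fintype.not_linearIndependent_iff] at h
    obtain ⟨c, hsum, j, hj⟩ := h
    rw [Fintype.sum_sum_type] at hsum
    simp only [Sum.elim_inl, Sum.elim_inr] at hsum
    rw [aux_sum_smul, aux_sum_smul] at hsum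
    set u : 𝓞 F := ∑ i, c (Sum.inl i) • b i with hu
    set v : 𝓞 F := ∑ i, c (Sum.inr i) • b i with hv
    by_cases hv0 : v = 0
    · exfalso
      have hcr : ∀ i, c (Sum.inr i) = 0 :=
        Fintype.linearIndependent_iff.mp b.linearIndependent _ (hv.symm.trans hv0)
      have hu0 : u = 0 := by
        have h2 : (algebraMap (𝓞 F) F u) • x₀ = 0 := by
          rw [hv0] at hsum; simpa using hsum
        rcases smul_eq_zero.mp h2 with h' | h'
        · exact (map_eq_zero_iff _ RingOfIntegers.coe_injective).mp h'
        · exact absurd h' hx₀0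
      have hcl : ∀ i, c (Sum.inl i) = 0 :=
        Fintype.linearIndependent_iff.mp b.linearIndependent _ (hu.symm.trans hu0)
      cases j with
      | inl i => exact hj (hcl i)
      | inr i => exact hj (hcr i)
    · exact ⟨-u, v, hv0, by rw [map_neg, neg_smul]; exact eq_neg_of_add_eq_zero_right hsum⟩
  -- choose witnesses
  choose! u v hv0 heq using hpair
  set m : 𝓞 F := ∏ y ∈ s, v y with hm
  have hm0 : m ≠ 0 := Finset.prod_ne_zero_iff.mpr fun y hy => hv0 y hy
  have hmF : (algebraMap (𝓞 F) F m) ≠ 0 :=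
    (map_ne_zero_iff _ RingOfIntegers.coe_injective).mpr hm0
  -- the ℤ-linear map ψ : 𝓞 F → E, u ↦ u • x₀
  let ψ : 𝓞 F →ₗ[ℤ] E :=
    { toFun := fun w => (algebraMap (𝓞 F) F w) • x₀
      map_add' := fun a c => by
        show (algebraMap (𝓞 F) F (a + c)) • x₀ = _
        rw [map_add, add_smul]
      map_smul' := fun z a => by
        show (algebraMap (𝓞 F) F (z • a)) • x₀ = z • ((algebraMap (𝓞 F) F a) • x₀)
        rw [map_zsmul, smul_assoc] }
  -- each (m • y) for y ∈ s lies in the image of ψ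
  have hkey : ∀ y ∈ s, ψ ((∏ y' ∈ s.erase y, v y') * u y) = (algebraMap (𝓞 F) F m) • y := by
    intro y hy
    show (algebraMap (𝓞 F) F ((∏ y' ∈ s.erase y, v y') * u y)) • x₀ = _
    rw [map_mul, mul_smul, ← heq y hy, ← mul_smul, ← map_mul, Finset.prod_erase_mul s v hy]
  -- multiplication by m is injective ℝ-linear
  let T : E →ₗ[ℝ] E :=
    { toFun := fun w => (algebraMap (𝓞 F) F m) • w
      map_add' := fun a c => smul_add _ a c
      map_smul' := fun r w => smul_comm _ r w }
  have hTinj : Function.Injective T := smul_right_injective E hmF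
  have li2 : LinearIndependent ℝ (T ∘ (fun x : s => (x : E))) :=
    hli.map' T (LinearMap.ker_eq_bot.mpr hTinj)
  have li3 : LinearIndependent ℤ (T ∘ (fun x : s => (x : E))) :=
    li2.restrict_scalars (by
      intro a c h
      simpa using h)
  let h : s → 𝓞 F := fun y => (∏ y' ∈ s.erase y, v y') * u (y : E)
  have hcomp : ψ ∘ h = T ∘ (fun x : s => (x : E)) := by
    funext y
    exact hkey (y : E) y.2
  have li4 : LinearIndependent ℤ h :=
    LinearIndependent.of_comp ψ (by rw [hcomp]; exact li3)
  have hOfin : Module.Finite ℤ (𝓞 F) := Module.Finite.of_basis b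
  have hrank : finrank ℤ (𝓞 F) = n := by
    rw [finrank_eq_card_basis b, Fintype.card_fin]
  have hle : Fintype.card s ≤ n := hrank ▸ li4.fintype_card_le_finrank
  rw [Fintype.card_coe, hcard] at hle
  omega

end Aux

/-- Let `F` be a number field of degree `n` and let `Λ` be a lattice in a
`2n`-dimensional real Euclidean space `E` carrying a compatible `F`-module structure. If
`Λ` is stable under multiplication by `𝓞_F` and the multiplications by the elements of a
fixed `ℤ`-basis of `𝓞_F` are bounded in operator norm by `C`, then the successive minima
satisfy `m_n ≤ C' m_1` and `m_{2n} ≤ C' m_{n+1}` with `C'` depending only on `C` and `n`. -/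
theorem succMin_comparison (n : ℕ) (hn : 0 < n) (C : ℝ) :
    ∃ C' : ℝ, 0 < C' ∧
      ∀ (F : Type) [Field F] [NumberField F], Module.finrank ℚ F = n →
      ∀ (E : Type) [NormedAddCommGroup E] [InnerProductSpace ℝ E],
        Module.finrank ℝ E = 2 * n →
      ∀ [Module F E] [SMulCommClass F ℝ E],
      ∀ (b : Module.Basis (Fin n) ℤ (𝓞 F)),
      ∀ (Λ : Submodule ℤ E) [DiscreteTopology Λ] [IsZLattice ℝ Λ],
        (∀ (u : 𝓞 F), ∀ x ∈ Λ, (algebraMap (𝓞 F) F u) • x ∈ Λ) →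
        (∀ (i : Fin n) (x : E), ‖(algebraMap (𝓞 F) F (b i)) • x‖ ≤ C * ‖x‖) →
        succMin Λ n ≤ C' * succMin Λ 1 ∧
          succMin Λ (2 * n) ≤ C' * succMin Λ (n + 1) := by
  classical
  refine ⟨max C 1, lt_of_lt_of_le one_pos (le_max_right C 1), ?_⟩
  intro F _ _ hF E _ _ hE _ _ b Λ _ _ hstab hC
  set C' : ℝ := max C 1 with hC'def
  have hC'pos : (0:ℝ) < C' := lt_of_lt_of_le one_pos (le_max_right C 1)
  have hfd : FiniteDimensional ℝ E := FiniteDimensional.of_finrank_pos (by rw [hE]; omega)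
  have hfinΛ : Module.Finite ℤ Λ := ZLattice.module_finite ℝ Λ
  have hfreeΛ : Module.Free ℤ Λ := ZLattice.module_free ℝ Λ
  let B := Module.Free.chooseBasis ℤ Λ
  let Bℝ := B.ofZLatticeBasis ℝ Λ
  have hcardI : Fintype.card (Module.Free.ChooseBasisIndex ℤ Λ) = 2 * n := by
    rw [← Module.finrank_eq_card_basis Bℝ, hE]
  -- nonemptiness of the defining sets
  have hSne : ∀ k : ℕ, k ≤ 2 * n →
      {r : ℝ | 0 ≤ r ∧ ∃ s : Finset E, ↑s ⊆ (Λ : Set E) ∧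
        LinearIndependent ℝ (fun x : s => (x : E)) ∧ s.card = k ∧
          ∀ x ∈ s, ‖x‖ ≤ r}.Nonempty := by
    intro k hk
    obtain ⟨e⟩ : Nonempty (Fin k ↪ Module.Free.ChooseBasisIndex ℤ Λ) :=
      Function.Embedding.nonempty_of_card_le (by rw [Fintype.card_fin, hcardI]; exact hk)
    set g : Fin k → E := Bℝ ∘ e with hg
    have hgmem : ∀ i, g i ∈ Λ := by
      intro i
      show Bℝ (e i) ∈ Λ
      rw [Module.Basis.ofZLatticeBasis_apply]
      exact SetLike.coe_mem _
    have hgli : LinearIndependent ℝ g := Bℝ.linearIndependent.comp e e.injective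
    refine ⟨∑ i, ‖g i‖, aux_mem Λ g (Fintype.card_fin k) hgmem hgli
      (Finset.sum_nonneg fun i _ => norm_nonneg _) fun i => ?_⟩
    exact Finset.single_le_sum (f := fun i => ‖g i‖) (fun j _ => norm_nonneg _)
      (Finset.mem_univ i)
  -- generic reduction step
  have step : ∀ k₀ k₁ : ℕ, k₀ ≤ 2 * n →
      (∀ r : ℝ, (0 ≤ r ∧ ∃ s : Finset E, ↑s ⊆ (Λ : Set E) ∧
        LinearIndependent ℝ (fun x : s => (x : E)) ∧ s.card = k₀ ∧
          ∀ x ∈ s, ‖x‖ ≤ r) → succMin Λ k₁ ≤ C' * r) →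
      succMin Λ k₁ ≤ C' * succMin Λ k₀ := by
    intro k₀ k₁ hk2n hstep
    have h1 : succMin Λ k₁ / C' ≤ succMin Λ k₀ := by
      refine le_csInf (hSne k₀ hk2n) fun r hr => ?_
      rw [div_le_iff₀ hC'pos, mul_comm]
      exact hstep r hr
    rw [div_le_iff₀ hC'pos] at h1
    rw [mul_comm]
    exact h1
  constructor
  · refine step 1 n (by omega) ?_
    rintro r ⟨hr0, s, hsub, hli, hcard, hnorm⟩
    obtain ⟨Q, rfl⟩ := Finset.card_eq_one.mp hcard
    have hQΛ : Q ∈ Λ := hsub (Finset.mem_singleton_self Q)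
    have hQr : ‖Q‖ ≤ r := hnorm Q (Finset.mem_singleton_self Q)
    have hQ0 : Q ≠ 0 := hli.ne_zero ⟨Q, Finset.mem_singleton_self Q⟩
    have hmem : ∀ i : Fin n, (algebraMap (𝓞 F) F (b i)) • Q ∈ Λ :=
      fun i => hstab (b i) Q hQΛ
    have hliR : LinearIndependent ℝ (fun i : Fin n => (algebraMap (𝓞 F) F (b i)) • Q) :=
      aux_li_real_of_li_int hmem (aux_li_single b hQ0)
    refine aux_succMin_le Λ _ (Fintype.card_fin n) hmem hliR
      (mul_nonneg hC'pos.le hr0) fun i => ?_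
    calc ‖(algebraMap (𝓞 F) F (b i)) • Q‖ ≤ C * ‖Q‖ := hC i Q
      _ ≤ C' * ‖Q‖ := mul_le_mul_of_nonneg_right (le_max_left C 1) (norm_nonneg Q)
      _ ≤ C' * r := mul_le_mul_of_nonneg_left hQr hC'pos.le
  · refine step (n + 1) (2 * n) (by omega) ?_
    rintro r ⟨hr0, s, hsub, hli, hcard, hnorm⟩
    obtain ⟨x, hx, y, hy, hliZ⟩ := aux_exists_pair hn b s hli hcard
    set g : Fin n ⊕ Fin n → E :=
      Sum.elim (fun i : Fin n => (algebraMap (𝓞 F) F (b i)) • x)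
        (fun i : Fin n => (algebraMap (𝓞 F) F (b i)) • y) with hg
    have hmem : ∀ j, g j ∈ Λ := by
      rintro (i | i)
      · exact hstab (b i) x (hsub hx)
      · exact hstab (b i) y (hsub hy)
    have hliR : LinearIndependent ℝ g := aux_li_real_of_li_int hmem hliZ
    have hcard2 : Fintype.card (Fin n ⊕ Fin n) = 2 * n := by
      rw [Fintype.card_sum, Fintype.card_fin]; omega
    refine aux_succMin_le Λ g hcard2 hmem hliR (mul_nonneg hC'pos.le hr0) ?_
    rintro (i | i)
    · calc ‖(algebraMap (𝓞 F) F (b i)) • x‖ ≤ C * ‖x‖ := hC i x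
        _ ≤ C' * ‖x‖ := mul_le_mul_of_nonneg_right (le_max_left C 1) (norm_nonneg x)
        _ ≤ C' * r := mul_le_mul_of_nonneg_left (hnorm x hx) hC'pos.le
    · calc ‖(algebraMap (𝓞 F) F (b i)) • y‖ ≤ C * ‖y‖ := hC i y
        _ ≤ C' * ‖y‖ := mul_le_mul_of_nonneg_right (le_max_left C 1) (norm_nonneg y)
        _ ≤ C' * r := mul_le_mul_of_nonneg_left (hnorm y hy) hC'pos.le
end

section
/- Let p be a prime of a number field F with completion F_p, ring of integers O_p, and uniformizer ϖ. Let K_0 ⊂ GL_2(O_p) be the subgroup of matrices with lower-left entry in ϖO_p, let A = (0 1; ϖ 0), and let K* be the group generated by K_0, A, and the center Z(F_p). Then any g = (a b; c d) ∈ GL_2(F_p) can be written as g = (y x; 0 1)·k with y ∈ F_p^×, x ∈ F_p, k ∈ K*; in any such decomposition, |y|_p equals |(ad−bc)/gcd(c,d)²|_p if |c|_p < |d|_p, and |ϖ·(ad−bc)/gcd(c,d)²|_p if |c|_p ≥ |d|_p, where gcd(c,d) generates the ideal cO_p + dO_p. Moreover, the coset of k in K*/(Z(F_p)K_0) is determined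 by g: it is trivial iff |c|_p < |d|_p. -/
open Matrix

variable {K : Type*} [Field K]

/-- The `GL₂` elements whose matrix lies in the Iwahori-type subgroup `K₀`: integral
entries, unit determinant, and lower-left entry divisible by the uniformizer `ϖ`. -/
def iwahoriSet (val : Valuation K (WithZero (Multiplicative ℤ))) (ϖ : K) :
    Set (GL (Fin 2) K) :=
  {g | (∀ i j, val ((g : Matrix (Fin 2) (Fin 2) K) i j) ≤ 1) ∧
    val ((g : Matrix (Fin 2) (Fin 2) K).det) = 1 ∧
    val ((g : Matrix (Fin 2) (Fin 2) K) 1 0) ≤ val ϖ}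

/-- The nonzero scalar matrices in `GL₂(K)`, i.e. the center `Z(K)`. -/
def scalarSet (K : Type*) [Field K] : Set (GL (Fin 2) K) :=
  {g | ∃ u : K, u ≠ 0 ∧ (g : Matrix (Fin 2) (Fin 2) K) = u • (1 : Matrix (Fin 2) (Fin 2) K)}

/-- The subgroup `Z(K)·K₀` of `GL₂(K)`. -/
def ZK0 (val : Valuation K (WithZero (Multiplicative ℤ))) (ϖ : K) : Subgroup (GL (Fin 2) K) :=
  Subgroup.closure (scalarSet K ∪ iwahoriSet val ϖ)

/-- The group `K*` generated by `Z(K)`, `K₀` and the Atkin–Lehner element `A`. -/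
def KstarGroup (val : Valuation K (WithZero (Multiplicative ℤ))) (ϖ : K)
    (A : GL (Fin 2) K) : Subgroup (GL (Fin 2) K) :=
  Subgroup.closure (scalarSet K ∪ iwahoriSet val ϖ ∪ {A})

section Aux
abbrev Γ := WithZero (Multiplicative ℤ)

/-- Matrix-level Iwahori predicate. -/
def Pm (val : Valuation K Γ) (ϖ : K) (m : Matrix (Fin 2) (Fin 2) K) : Prop :=
  (∀ i j, val (m i j) ≤ 1) ∧ val m.det = 1 ∧ val (m 1 0) ≤ val ϖ

variable {val : Valuation K Γ} {ϖ : K}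

lemma hϖ_lt_one (hϖ : val ϖ = ((Multiplicative.ofAdd (-1 : ℤ) : Multiplicative ℤ) : Γ)) : val ϖ < 1 := by
  rw [hϖ]
  exact_mod_cast (by decide : (Multiplicative.ofAdd (-1 : ℤ)) < (1 : Multiplicative ℤ))

lemma hϖ_ne_zero (hϖ : val ϖ = ((Multiplicative.ofAdd (-1 : ℤ) : Multiplicative ℤ) : Γ)) : val ϖ ≠ 0 := by rw [hϖ]; exact WithZero.coe_ne_zero

lemma hϖK_ne_zero (hϖ : val ϖ = ((Multiplicative.ofAdd (-1 : ℤ) : Multiplicative ℤ) : Γ)) : ϖ ≠ 0 := fun h => hϖ_ne_zero hϖ (by rw [h, map_zero])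

lemma Pm.one : Pm val ϖ (1 : Matrix (Fin 2) (Fin 2) K) := by
  refine ⟨fun i j => ?_, by simp, by simp [Matrix.one_apply]⟩
  rcases eq_or_ne i j with h | h <;> simp [Matrix.one_apply, h]

lemma Pm.mul {m n : Matrix (Fin 2) (Fin 2) K} (hm : Pm val ϖ m) (hn : Pm val ϖ n) :
    Pm val ϖ (m * n) := by
  obtain ⟨hm1, hm2, hm3⟩ := hm
  obtain ⟨hn1, hn2, hn3⟩ := hn
  have key : ∀ i j, (m * n) i j = m i 0 * n 0 j + m i 1 * n 1 j := by
    intro i j; simp [Matrix.mul_apply, Fin.sum_univ_two]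
  refine ⟨fun i j => ?_, ?_, ?_⟩
  · rw [key]
    refine le_trans (val.map_add _ _) (max_le ?_ ?_)
    · rw [_root_.map_mul]; exact mul_le_one' (hm1 i 0) (hn1 0 j)
    · rw [_root_.map_mul]; exact mul_le_one' (hm1 i 1) (hn1 1 j)
  · rw [Matrix.det_mul, _root_.map_mul, hm2, hn2, one_mul]
  · rw [key]
    refine le_trans (val.map_add _ _) (max_le ?_ ?_)
    · rw [_root_.map_mul]
      calc val (m 1 0) * val (n 0 0) ≤ val ϖ * 1 := mul_le_mul' hm3 (hn1 0 0)
      _ = val ϖ := mul_one _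
    · rw [_root_.map_mul]
      calc val (m 1 1) * val (n 1 0) ≤ 1 * val ϖ := mul_le_mul' (hm1 1 1) hn3
      _ = val ϖ := one_mul _

lemma one_of_mul_eq_one {x y : Γ} (hx : x ≤ 1) (hy : y ≤ 1) (h : x * y = 1) :
    x = 1 ∧ y = 1 := by
  constructor
  · refine le_antisymm hx ?_
    calc (1:Γ) = x * y := h.symm
    _ ≤ x * 1 := mul_le_mul_right hy x
    _ = x := mul_one x
  · refine le_antisymm hy ?_
    calc (1:Γ) = x * y := h.symm
    _ ≤ 1 * y := mul_le_mul_left hx y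
    _ = y := one_mul y

lemma Pm.diag (hϖ : val ϖ = ((Multiplicative.ofAdd (-1 : ℤ) : Multiplicative ℤ) : Γ))
    {m : Matrix (Fin 2) (Fin 2) K} (hm : Pm val ϖ m) :
    val (m 0 0) = 1 ∧ val (m 1 1) = 1 := by
  obtain ⟨h1, h2, h3⟩ := hm
  have hY : val (m 0 1 * m 1 0) < 1 := by
    rw [_root_.map_mul]
    calc val (m 0 1) * val (m 1 0) ≤ 1 * val ϖ := mul_le_mul' (h1 0 1) h3
    _ = val ϖ := one_mul _
    _ < 1 := hϖ_lt_one hϖ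
  have hXY : val (m 0 1 * m 1 0) < val (m 0 0 * m 1 1) := by
    by_contra hcon
    push_neg at hcon
    have : val m.det < 1 := by
      rw [Matrix.det_fin_two]
      exact lt_of_le_of_lt (le_trans (val.map_sub _ _)
        (max_le (le_trans hcon le_rfl) le_rfl)) hY
    exact absurd h2 (ne_of_lt this)
  have hX : val (m 0 0 * m 1 1) = 1 := by
    have := val.map_sub_eq_of_lt_left hXY
    rw [← Matrix.det_fin_two, h2] at this
    exact this.symm
  rw [_root_.map_mul] at hX
  exact one_of_mul_eq_one (h1 0 0) (h1 1 1) hX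

lemma Pm.det_ne_zero {m : Matrix (Fin 2) (Fin 2) K} (hm : Pm val ϖ m) : m.det ≠ 0 := by
  intro h
  have := hm.2.1
  rw [h, map_zero] at this
  exact zero_ne_one this

lemma Pm.inv {m : Matrix (Fin 2) (Fin 2) K} (hm : Pm val ϖ m) : Pm val ϖ m⁻¹ := by
  have hdet := hm.det_ne_zero
  obtain ⟨h1, h2, h3⟩ := hm
  have hadj : m.adjugate = !![m 1 1, -(m 0 1); -(m 1 0), m 0 0] := Matrix.adjugate_fin_two m
  have hinv : m⁻¹ = m.det⁻¹ • !![m 1 1, -(m 0 1); -(m 1 0), m 0 0] := by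
    rw [Matrix.inv_def, Ring.inverse_eq_inv', hadj]
  have hval : ∀ z : K, val (m.det⁻¹ * z) = val z := by
    intro z
    rw [_root_.map_mul, map_inv₀, h2, inv_one, one_mul]
  refine ⟨fun i j => ?_, ?_, ?_⟩
  · rw [hinv]
    fin_cases i <;> fin_cases j <;>
      simp [hval, Valuation.map_neg] <;> exact h1 _ _
  · rw [Matrix.det_nonsing_inv, Ring.inverse_eq_inv', map_inv₀, h2, inv_one]
  · rw [hinv]
    simp [hval, Valuation.map_neg]
    exact h3

lemma conj_eq (hϖK : ϖ ≠ 0) (m : Matrix (Fin 2) (Fin 2) K) :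
    !![0, 1; ϖ, 0] * m * !![(0:K), ϖ⁻¹; 1, 0] =
      !![m 1 1, m 1 0 * ϖ⁻¹; ϖ * m 0 1, m 0 0] := by
  rw [eta_fin_two m, Matrix.mul_fin_two, Matrix.mul_fin_two]
  ext i j
  fin_cases i <;> fin_cases j <;> simp <;> field_simp

lemma Pm.conj (hϖ : val ϖ = ((Multiplicative.ofAdd (-1 : ℤ) : Multiplicative ℤ) : Γ))
    {m : Matrix (Fin 2) (Fin 2) K} (hm : Pm val ϖ m) :
    Pm val ϖ (!![0, 1; ϖ, 0] * m * !![(0:K), ϖ⁻¹; 1, 0]) := by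
  have hϖK : ϖ ≠ 0 := hϖK_ne_zero hϖ
  obtain ⟨h1, h2, h3⟩ := hm
  have hϖ1 : val ϖ ≤ 1 := (hϖ_lt_one hϖ).le
  have hϖinv : val ϖ * val ϖ⁻¹ = 1 := by
    rw [map_inv₀, mul_inv_cancel₀ (hϖ_ne_zero hϖ)]
  rw [conj_eq hϖK]
  refine ⟨fun i j => ?_, ?_, ?_⟩
  · have e01 : val (m 1 0 * ϖ⁻¹) ≤ 1 := by
      rw [_root_.map_mul]
      calc val (m 1 0) * val ϖ⁻¹ ≤ val ϖ * val ϖ⁻¹ := mul_le_mul_left h3 _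
      _ = 1 := hϖinv
    have e10 : val (ϖ * m 0 1) ≤ 1 := by
      rw [_root_.map_mul]
      calc val ϖ * val (m 0 1) ≤ 1 * 1 := mul_le_mul' hϖ1 (h1 0 1)
      _ = 1 := one_mul 1
    fin_cases i <;> fin_cases j
    · simpa using h1 1 1
    · simpa using e01
    · simpa using e10
    · simpa using h1 0 0
  · rw [Matrix.det_fin_two_of]
    have : m 1 1 * m 0 0 - m 1 0 * ϖ⁻¹ * (ϖ * m 0 1) = m.det := by
      rw [Matrix.det_fin_two]; field_simp
    rw [this, h2]
  · have : (!![m 1 1, m 1 0 * ϖ⁻¹; ϖ * m 0 1, m 0 0] : Matrix (Fin 2) (Fin 2) K) 1 0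
        = ϖ * m 0 1 := by simp
    rw [this, _root_.map_mul]
    calc val ϖ * val (m 0 1) ≤ val ϖ * 1 := mul_le_mul_right (h1 0 1) _
    _ = val ϖ := mul_one _

/-- scaled-Iwahori predicate at `GL` level. -/
def Qg (val : Valuation K Γ) (ϖ : K) (k : GL (Fin 2) K) : Prop :=
  ∃ u : K, u ≠ 0 ∧ Pm val ϖ (u⁻¹ • (k : Matrix (Fin 2) (Fin 2) K))

lemma Qg.one : Qg val ϖ (1 : GL (Fin 2) K) :=
  ⟨1, one_ne_zero, by simpa using Pm.one⟩

lemma Qg.mul {k₁ k₂ : GL (Fin 2) K} (h₁ : Qg val ϖ k₁) (h₂ : Qg val ϖ k₂) :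
    Qg val ϖ (k₁ * k₂) := by
  obtain ⟨u₁, hu₁, hP₁⟩ := h₁
  obtain ⟨u₂, hu₂, hP₂⟩ := h₂
  refine ⟨u₁ * u₂, mul_ne_zero hu₁ hu₂, ?_⟩
  have : (u₁ * u₂)⁻¹ • ((k₁ * k₂ : GL (Fin 2) K) : Matrix (Fin 2) (Fin 2) K)
      = (u₁⁻¹ • (k₁ : Matrix (Fin 2) (Fin 2) K)) * (u₂⁻¹ • (k₂ : Matrix (Fin 2) (Fin 2) K)) := by
    rw [Units.val_mul, smul_mul_smul_comm, mul_inv]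
  rw [this]
  exact hP₁.mul hP₂

lemma coe_GL_inv (k : GL (Fin 2) K) :
    ((k⁻¹ : GL (Fin 2) K) : Matrix (Fin 2) (Fin 2) K)
      = ((k : Matrix (Fin 2) (Fin 2) K))⁻¹ :=
  Matrix.coe_units_inv k

lemma Qg.inv {k : GL (Fin 2) K} (h : Qg val ϖ k) : Qg val ϖ k⁻¹ := by
  obtain ⟨u, hu, hP⟩ := h
  refine ⟨u⁻¹, inv_ne_zero hu, ?_⟩
  have key : (u⁻¹)⁻¹ • ((k⁻¹ : GL (Fin 2) K) : Matrix (Fin 2) (Fin 2) K)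
      = (u⁻¹ • (k : Matrix (Fin 2) (Fin 2) K))⁻¹ := by
    rw [coe_GL_inv]
    refine (Matrix.inv_eq_left_inv ?_).symm
    rw [smul_mul_smul_comm, inv_inv, mul_inv_cancel₀ hu, ← coe_GL_inv, ← Units.val_mul,
      inv_mul_cancel, Units.val_one, one_smul]
  rw [key]
  exact hP.inv

variable (hϖw : val ϖ = ((Multiplicative.ofAdd (-1 : ℤ) : Multiplicative ℤ) : Γ))
  {A : GL (Fin 2) K} (hAw : (A : Matrix (Fin 2) (Fin 2) K) = !![0, 1; ϖ, 0])

include hϖw hAw in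
lemma Ainv_coe : ((A⁻¹ : GL (Fin 2) K) : Matrix (Fin 2) (Fin 2) K) = !![(0:K), ϖ⁻¹; 1, 0] := by
  rw [coe_GL_inv, hAw]
  refine Matrix.inv_eq_left_inv ?_
  rw [Matrix.mul_fin_two]
  have hne := hϖK_ne_zero hϖw
  ext i j
  fin_cases i <;> fin_cases j <;> simp [Matrix.one_fin_two, inv_mul_cancel₀ hne]

include hϖw hAw in
lemma Qg.conjA {k : GL (Fin 2) K} (h : Qg val ϖ k) : Qg val ϖ (A * k * A⁻¹) := by
  obtain ⟨u, hu, hP⟩ := h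
  refine ⟨u, hu, ?_⟩
  have : u⁻¹ • ((A * k * A⁻¹ : GL (Fin 2) K) : Matrix (Fin 2) (Fin 2) K)
      = !![0, 1; ϖ, 0] * (u⁻¹ • (k : Matrix (Fin 2) (Fin 2) K)) * !![(0:K), ϖ⁻¹; 1, 0] := by
    rw [Units.val_mul, Units.val_mul, hAw, Ainv_coe hϖw hAw, mul_smul_comm, Matrix.smul_mul]
  rw [this]
  exact hP.conj hϖw

include hϖw hAw in
lemma QgA2 : Qg val ϖ (A * A) := by
  refine ⟨ϖ, hϖK_ne_zero hϖw, ?_⟩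
  have : ϖ⁻¹ • ((A * A : GL (Fin 2) K) : Matrix (Fin 2) (Fin 2) K)
      = (1 : Matrix (Fin 2) (Fin 2) K) := by
    rw [Units.val_mul, hAw, Matrix.mul_fin_two]
    have hne := hϖK_ne_zero hϖw
    ext i j
    fin_cases i <;> fin_cases j <;>
      simp [Matrix.one_fin_two, inv_mul_cancel₀ hne]
  rw [this]
  exact Pm.one

lemma mem_iwahori_iff (g : GL (Fin 2) K) : g ∈ iwahoriSet val ϖ ↔ Pm val ϖ (g : Matrix (Fin 2) (Fin 2) K) :=
  Iff.rfl

/-- the scalar matrix as a GL element -/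
def scalarGL (u : K) (hu : u ≠ 0) : GL (Fin 2) K :=
  Units.mk (u • 1) (u⁻¹ • 1)
    (by rw [smul_mul_smul_comm, mul_inv_cancel₀ hu, mul_one, one_smul])
    (by rw [smul_mul_smul_comm, inv_mul_cancel₀ hu, mul_one, one_smul])

lemma scalarGL_coe (u : K) (hu : u ≠ 0) :
    ((scalarGL u hu : GL (Fin 2) K) : Matrix (Fin 2) (Fin 2) K) = u • 1 := rfl

lemma scalarGL_inv_coe (u : K) (hu : u ≠ 0) :
    ((( scalarGL u hu)⁻¹ : GL (Fin 2) K) : Matrix (Fin 2) (Fin 2) K) = u⁻¹ • 1 := rfl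

lemma scalarGL_mem (u : K) (hu : u ≠ 0) : scalarGL u hu ∈ scalarSet K := ⟨u, hu, rfl⟩

lemma Qg.mem_closure {k : GL (Fin 2) K} (h : Qg val ϖ k) :
    k ∈ Subgroup.closure (scalarSet K ∪ iwahoriSet val ϖ) := by
  obtain ⟨u, hu, hP⟩ := h
  have hks : k = scalarGL u hu * ((scalarGL u hu)⁻¹ * k) := by group
  have hcoe : (((scalarGL u hu)⁻¹ * k : GL (Fin 2) K) : Matrix (Fin 2) (Fin 2) K)
      = u⁻¹ • (k : Matrix (Fin 2) (Fin 2) K) := by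
    rw [Units.val_mul, scalarGL_inv_coe, Matrix.smul_mul, Matrix.one_mul]
  rw [hks]
  refine mul_mem (Subgroup.subset_closure (Or.inl (scalarGL_mem u hu)))
    (Subgroup.subset_closure (Or.inr ?_))
  rw [mem_iwahori_iff, hcoe]
  exact hP

lemma mem_ZK0_Qg {k : GL (Fin 2) K} 
    (h : k ∈ Subgroup.closure (scalarSet K ∪ iwahoriSet val ϖ)) : Qg val ϖ k := by
  induction h using Subgroup.closure_induction with
  | mem x hx =>
    rcases hx with hx | hx
    · obtain ⟨u, hu, hx⟩ := hx
      exact ⟨u, hu, by rw [hx, smul_smul, inv_mul_cancel₀ hu, one_smul]; exact Pm.one⟩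
    · exact ⟨1, one_ne_zero, by rw [inv_one, one_smul]; exact (mem_iwahori_iff _).mp hx⟩
  | one => exact Qg.one
  | mul x y hx hy ihx ihy => exact ihx.mul ihy
  | inv x hx ihx => exact ihx.inv

include hϖw hAw in
lemma Kstar_cases {k : GL (Fin 2) K}
    (h : k ∈ Subgroup.closure (scalarSet K ∪ iwahoriSet val ϖ ∪ {A})) :
    Qg val ϖ k ∨ Qg val ϖ (k * A⁻¹) := by
  induction h using Subgroup.closure_induction with
  | mem x hx =>
    rcases hx with (hx | hx) | hx
    · obtain ⟨u, hu, hx⟩ := hx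
      exact Or.inl ⟨u, hu, by rw [hx, smul_smul, inv_mul_cancel₀ hu, one_smul]; exact Pm.one⟩
    · exact Or.inl ⟨1, one_ne_zero, by rw [inv_one, one_smul]; exact (mem_iwahori_iff _).mp hx⟩
    · rw [Set.mem_singleton_iff] at hx
      subst hx
      right
      rw [mul_inv_cancel]
      exact Qg.one
  | one => exact Or.inl Qg.one
  | mul x y hx hy ihx ihy =>
    rcases ihx with ihx | ihx <;> rcases ihy with ihy | ihy
    · exact Or.inl (ihx.mul ihy)
    · refine Or.inr ?_
      have : x * y * A⁻¹ = x * (y * A⁻¹) := by group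
      rw [this]
      exact ihx.mul ihy
    · refine Or.inr ?_
      have : x * y * A⁻¹ = (x * A⁻¹) * (A * y * A⁻¹) := by group
      rw [this]
      exact ihx.mul (ihy.conjA hϖw hAw)
    · refine Or.inl ?_
      have : x * y = (x * A⁻¹) * (A * (y * A⁻¹) * A⁻¹) * (A * A) := by group
      rw [this]
      exact (ihx.mul ((ihy.conjA hϖw hAw))).mul (QgA2 hϖw hAw)
  | inv x hx ihx =>
    rcases ihx with ihx | ihx
    · exact Or.inl ihx.inv
    · refine Or.inr ?_
      have : x⁻¹ * A⁻¹ = (A * A)⁻¹ * (A * (x * A⁻¹)⁻¹ * A⁻¹) := by group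
      rw [this]
      exact ((QgA2 hϖw hAw).inv).mul (ihx.inv.conjA hϖw hAw)

include hϖw in
lemma Qg.row_val {k : GL (Fin 2) K} (h : Qg val ϖ k) :
    val ((k : Matrix (Fin 2) (Fin 2) K) 1 0) < val ((k : Matrix (Fin 2) (Fin 2) K) 1 1) ∧
    val ((k : Matrix (Fin 2) (Fin 2) K) 1 1) ≠ 0 ∧
    val ((k : Matrix (Fin 2) (Fin 2) K).det)
      = (val ((k : Matrix (Fin 2) (Fin 2) K) 1 1)) ^ 2 := by
  obtain ⟨u, hu, hP⟩ := h
  have hu0 : val u ≠ 0 := (val.ne_zero_iff).mpr hu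
  have h11 : val ((k : Matrix (Fin 2) (Fin 2) K) 1 1) = val u := by
    have h := (hP.diag hϖw).2
    rw [Matrix.smul_apply, smul_eq_mul, _root_.map_mul, map_inv₀, inv_mul_eq_one₀ hu0] at h
    exact h.symm
  have h10 : val ((k : Matrix (Fin 2) (Fin 2) K) 1 0) ≤ val u * val ϖ := by
    have h := hP.2.2
    rw [Matrix.smul_apply, smul_eq_mul, _root_.map_mul, map_inv₀] at h
    calc val ((k : Matrix (Fin 2) (Fin 2) K) 1 0)
        = val u * ((val u)⁻¹ * val ((k : Matrix (Fin 2) (Fin 2) K) 1 0)) := by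
          rw [← mul_assoc, mul_inv_cancel₀ hu0, one_mul]
    _ ≤ val u * val ϖ := mul_le_mul_right h _
  refine ⟨?_, by rw [h11]; exact hu0, ?_⟩
  · calc val ((k : Matrix (Fin 2) (Fin 2) K) 1 0) ≤ val u * val ϖ := h10
    _ < val u * 1 := mul_lt_mul_of_pos_left (hϖ_lt_one hϖw) (zero_lt_iff.mpr hu0)
    _ = val ((k : Matrix (Fin 2) (Fin 2) K) 1 1) := by rw [mul_one, h11]
  · have h := hP.2.1
    rw [Matrix.det_smul, Fintype.card_fin, _root_.map_mul, map_pow, map_inv₀,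
      inv_pow, inv_mul_eq_one₀ (pow_ne_zero 2 hu0)] at h
    rw [h11, ← h]

lemma le_of_lt_mul_ϖinv (hϖw : val ϖ = ((Multiplicative.ofAdd (-1 : ℤ) : Multiplicative ℤ) : Γ))
    {s t : Γ} (h : s < t * (val ϖ)⁻¹) : s ≤ t := by
  rcases eq_or_ne s 0 with rfl | hs0
  · exact zero_le'
  have ht0 : t ≠ 0 := by
    rintro rfl
    rw [zero_mul] at h
    exact absurd h (not_lt.mpr zero_le')
  obtain ⟨m, rfl⟩ := WithZero.ne_zero_iff_exists.mp hs0
  obtain ⟨n, rfl⟩ := WithZero.ne_zero_iff_exists.mp ht0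
  rw [hϖw, ← WithZero.coe_inv, ← WithZero.coe_mul, WithZero.coe_lt_coe] at h
  rw [WithZero.coe_le_coe]
  have hm := Multiplicative.toAdd_lt.mpr h
  simp only [toAdd_mul, toAdd_inv, toAdd_ofAdd] at hm
  have hmn : Multiplicative.toAdd m ≤ Multiplicative.toAdd n := by omega
  exact Multiplicative.toAdd_le.mp hmn

lemma le_ϖ_of_lt_one (hϖw : val ϖ = ((Multiplicative.ofAdd (-1 : ℤ) : Multiplicative ℤ) : Γ))
    {s : Γ} (hs : s < 1) : s ≤ val ϖ := by
  refine le_of_lt_mul_ϖinv hϖw ?_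
  rw [mul_inv_cancel₀ (hϖ_ne_zero hϖw)]
  exact hs

def lowerGL (e : K) : GL (Fin 2) K :=
  Units.mk !![1, 0; e, 1] !![1, 0; -e, 1]
    (by ext i j; fin_cases i <;> fin_cases j <;>
          simp [Matrix.mul_fin_two, Matrix.one_fin_two])
    (by ext i j; fin_cases i <;> fin_cases j <;>
          simp [Matrix.mul_fin_two, Matrix.one_fin_two])

lemma lowerGL_coe (e : K) :
    ((lowerGL e : GL (Fin 2) K) : Matrix (Fin 2) (Fin 2) K) = !![1, 0; e, 1] := rfl

lemma lt_one_of_lt {s t : Γ} (h : s < t) (ht : t ≠ 0) : s * t⁻¹ < 1 := by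
  have h2 := mul_lt_mul_of_pos_left h (zero_lt_iff.mpr (inv_ne_zero ht))
  rwa [inv_mul_cancel₀ ht, mul_comm t⁻¹ s] at h2

end Aux

/-- (Non-archimedean Iwasawa decomposition modulo Atkin–Lehner
operators, Lemma 2.) Over a non-archimedean local field `K` with normalized valuation
`val`, uniformizer `ϖ`, Iwahori subgroup `K₀` and Atkin–Lehner element `A = (0 1; ϖ 0)`,
every `g = (a b; c d) ∈ GL₂(K)` decomposes as `g = (y x; 0 1)·k` with `k ∈ K*`; in any
such decomposition `|y|` equals `|(ad-bc)/gcd(c,d)²|` if `|c| < |d|` and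
`|ϖ(ad-bc)/gcd(c,d)²|` if `|c| ≥ |d|` (here `|gcd(c,d)| = max(|c|,|d|)`), and the coset of
`k` in `K*/(Z(K)K₀)` is trivial iff `|c| < |d|`. -/
theorem iwasawa_decomposition_nonarchimedean
    (val : Valuation K (WithZero (Multiplicative ℤ))) (hsurj : Function.Surjective val)
    (ϖ : K) (hϖ : val ϖ = ((Multiplicative.ofAdd (-1 : ℤ) : Multiplicative ℤ) :
      WithZero (Multiplicative ℤ)))
    (A : GL (Fin 2) K) (hA : (A : Matrix (Fin 2) (Fin 2) K) = !![0, 1; ϖ, 0])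
    (g : GL (Fin 2) K) (a b c d : K)
    (hg : (g : Matrix (Fin 2) (Fin 2) K) = !![a, b; c, d]) :
    (∃ (y x : K) (k : GL (Fin 2) K), y ≠ 0 ∧ k ∈ KstarGroup val ϖ A ∧
      (g : Matrix (Fin 2) (Fin 2) K) = !![y, x; 0, 1] * (k : Matrix (Fin 2) (Fin 2) K)) ∧
    (∀ (y x : K) (k : GL (Fin 2) K), k ∈ KstarGroup val ϖ A →
      (g : Matrix (Fin 2) (Fin 2) K) = !![y, x; 0, 1] * (k : Matrix (Fin 2) (Fin 2) K) →
      (val y = if val c < val d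
          then val (a * d - b * c) / (max (val c) (val d)) ^ 2
          else val (ϖ * (a * d - b * c)) / (max (val c) (val d)) ^ 2) ∧
      (k ∈ ZK0 val ϖ ↔ val c < val d)) := by
  have hϖ0 : val ϖ ≠ 0 := hϖ_ne_zero hϖ
  have hϖK : ϖ ≠ 0 := hϖK_ne_zero hϖ
  have hgdet0 : (g : Matrix (Fin 2) (Fin 2) K).det ≠ 0 := by
    have hu : IsUnit (g : Matrix (Fin 2) (Fin 2) K) := ⟨g, rfl⟩
    exact ((Matrix.isUnit_iff_isUnit_det _).mp hu).ne_zero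
  have hdet_ad : (g : Matrix (Fin 2) (Fin 2) K).det = a * d - b * c := by
    rw [hg, Matrix.det_fin_two_of]
  have had : a * d - b * c ≠ 0 := hdet_ad ▸ hgdet0
  constructor
  · -- existence
    by_cases hlt : val c < val d
    · have hd : d ≠ 0 := by
        rintro rfl
        rw [map_zero] at hlt
        exact absurd hlt (not_lt.mpr zero_le')
      have hvd0 : val d ≠ 0 := (val.ne_zero_iff).mpr hd
      refine ⟨(a * d - b * c) / d ^ 2, b / d, scalarGL d hd * lowerGL (c / d),
        div_ne_zero had (pow_ne_zero 2 hd), ?_, ?_⟩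
      · refine mul_mem (Subgroup.subset_closure (Or.inl (Or.inl (scalarGL_mem d hd))))
          (Subgroup.subset_closure (Or.inl (Or.inr ?_)))
      -- lowerGL (c/d) ∈ iwahoriSet
        have hcd1 : val (c / d) < 1 := by
          rw [map_div₀, div_eq_mul_inv]
          exact lt_one_of_lt hlt hvd0
        have hcdϖ : val (c / d) ≤ val ϖ := le_ϖ_of_lt_one hϖ hcd1
        rw [mem_iwahori_iff, lowerGL_coe]
        refine ⟨fun i j => ?_, ?_, by simpa using hcdϖ⟩
        · fin_cases i <;> fin_cases j
          · simpa using le_refl (1 : WithZero (Multiplicative ℤ))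
          · simpa using zero_le'
          · simpa using le_trans hcdϖ (hϖ_lt_one hϖ).le
          · simpa using le_refl (1 : WithZero (Multiplicative ℤ))
        · rw [Matrix.det_fin_two_of]
          norm_num
      · have hk : ((scalarGL d hd * lowerGL (c / d) : GL (Fin 2) K) :
            Matrix (Fin 2) (Fin 2) K) = !![d, 0; c, d] := by
          rw [Units.val_mul, scalarGL_coe, lowerGL_coe]
          ext i j
          fin_cases i <;> fin_cases j <;>
            simp [Matrix.mul_apply, Fin.sum_univ_two, Matrix.one_apply] <;> field_simp
        rw [hg, hk]
        ext i j
        fin_cases i <;> fin_cases j <;>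
          simp [Matrix.mul_apply, Fin.sum_univ_two] <;> field_simp <;> ring
    · have hdc : val d ≤ val c := not_lt.mp hlt
      have hc : c ≠ 0 := by
        rintro rfl
        rw [map_zero] at hdc
        have hd0 : d = 0 := (val.zero_iff).mp (le_antisymm hdc zero_le')
        rw [hd0] at had
        simp at had
      have hvc0 : val c ≠ 0 := (val.ne_zero_iff).mpr hc
      have hcu : c * ϖ⁻¹ ≠ 0 := mul_ne_zero hc (inv_ne_zero hϖK)
      refine ⟨-(ϖ * (a * d - b * c)) / c ^ 2, a / c,
        scalarGL (c * ϖ⁻¹) hcu * lowerGL (d * ϖ / c) * A,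
        div_ne_zero (neg_ne_zero.mpr (mul_ne_zero hϖK had)) (pow_ne_zero 2 hc), ?_, ?_⟩
      · refine mul_mem (mul_mem
          (Subgroup.subset_closure (Or.inl (Or.inl (scalarGL_mem _ hcu))))
          (Subgroup.subset_closure (Or.inl (Or.inr ?_))))
          (Subgroup.subset_closure (Or.inr rfl))
        have hentry : val (d * ϖ / c) ≤ val ϖ := by
          rw [map_div₀, _root_.map_mul]
          rw [div_le_iff₀ (zero_lt_iff.mpr hvc0)]
          calc val d * val ϖ ≤ val c * val ϖ := mul_le_mul_left hdc _
          _ = val ϖ * val c := mul_comm _ _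
        rw [mem_iwahori_iff, lowerGL_coe]
        refine ⟨fun i j => ?_, ?_, by simpa using hentry⟩
        · fin_cases i <;> fin_cases j
          · simpa using le_refl (1 : WithZero (Multiplicative ℤ))
          · simpa using zero_le'
          · simpa using le_trans hentry (hϖ_lt_one hϖ).le
          · simpa using le_refl (1 : WithZero (Multiplicative ℤ))
        · rw [Matrix.det_fin_two_of]
          norm_num
      · have hk : ((scalarGL (c * ϖ⁻¹) hcu * lowerGL (d * ϖ / c) * A : GL (Fin 2) K) :
            Matrix (Fin 2) (Fin 2) K) = !![0, c * ϖ⁻¹; c, d] := by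
          rw [Units.val_mul, Units.val_mul, scalarGL_coe, lowerGL_coe, hA]
          ext i j
          fin_cases i <;> fin_cases j <;>
            simp [Matrix.mul_apply, Fin.sum_univ_two, Matrix.one_apply] <;>
            field_simp <;> ring
        rw [hg, hk]
        ext i j
        fin_cases i <;> fin_cases j <;>
          simp [Matrix.mul_apply, Fin.sum_univ_two] <;> field_simp <;> ring
  · -- uniqueness
    rintro y x k hk heq
    rw [hg] at heq
    have hc10 : (k : Matrix (Fin 2) (Fin 2) K) 1 0 = c := by
      have h := congrFun (congrFun heq 1) 0
      simpa [Matrix.mul_apply, Fin.sum_univ_two] using h.symm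
    have hd11 : (k : Matrix (Fin 2) (Fin 2) K) 1 1 = d := by
      have h := congrFun (congrFun heq 1) 1
      simpa [Matrix.mul_apply, Fin.sum_univ_two] using h.symm
    have hdet : a * d - b * c = y * (k : Matrix (Fin 2) (Fin 2) K).det := by
      have h := congrArg Matrix.det heq
      rw [Matrix.det_fin_two_of, Matrix.det_mul, Matrix.det_fin_two_of] at h
      simpa using h
    rcases Kstar_cases hϖ hA hk with hQ | hQ'
    · obtain ⟨hlt', hd0', hdet'⟩ := hQ.row_val hϖ
      rw [hc10, hd11] at hlt'
      rw [hd11] at hd0' hdet'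
      refine ⟨?_, ⟨fun _ => hlt', fun _ => hQ.mem_closure⟩⟩
      rw [if_pos hlt', max_eq_right hlt'.le, eq_div_iff (pow_ne_zero 2 hd0'),
        ← hdet', ← _root_.map_mul, ← hdet]
    · obtain ⟨hlt', hne', hdet'⟩ := hQ'.row_val hϖ
      have hm10 : ((k * A⁻¹ : GL (Fin 2) K) : Matrix (Fin 2) (Fin 2) K) 1 0 = d := by
        rw [Units.val_mul, Ainv_coe hϖ hA]
        simp [Matrix.mul_apply, Fin.sum_univ_two, hc10, hd11]
      have hm11 : ((k * A⁻¹ : GL (Fin 2) K) : Matrix (Fin 2) (Fin 2) K) 1 1 = c * ϖ⁻¹ := by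
        rw [Units.val_mul, Ainv_coe hϖ hA]
        simp [Matrix.mul_apply, Fin.sum_univ_two, hc10, hd11]
      have hmdet : ((k * A⁻¹ : GL (Fin 2) K) : Matrix (Fin 2) (Fin 2) K).det
          = (k : Matrix (Fin 2) (Fin 2) K).det * -ϖ⁻¹ := by
        rw [Units.val_mul, Ainv_coe hϖ hA, Matrix.det_mul, Matrix.det_fin_two_of]
        ring_nf
      rw [hm10] at hlt'
      rw [hm11] at hlt' hne'
      rw [hm11, hmdet] at hdet'
      have hc0 : val c ≠ 0 := by
        intro h0
        apply hne'
        rw [_root_.map_mul, h0, zero_mul]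
      have hdc : val d ≤ val c := by
        refine le_of_lt_mul_ϖinv hϖ ?_
        rwa [_root_.map_mul, map_inv₀] at hlt'
      have hncd : ¬ val c < val d := not_lt.mpr hdc
      -- val of det k
      have hdetk : val (k : Matrix (Fin 2) (Fin 2) K).det
          = (val c) ^ 2 * (val ϖ)⁻¹ := by
        have h := hdet'
        rw [_root_.map_mul, Valuation.map_neg, map_inv₀, _root_.map_mul, map_inv₀, mul_pow] at h
        -- h : val detk * (val ϖ)⁻¹ = (val c)^2 * ((val ϖ)⁻¹)^2
        have h2 : val (k : Matrix (Fin 2) (Fin 2) K).det * (val ϖ)⁻¹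
            = ((val c) ^ 2 * (val ϖ)⁻¹) * (val ϖ)⁻¹ := by
          rw [h, pow_two ((val ϖ)⁻¹), ← mul_assoc]
        exact mul_right_cancel₀ (inv_ne_zero hϖ0) h2
      refine ⟨?_, ?_⟩
      · rw [if_neg hncd, max_eq_left hdc, eq_div_iff (pow_ne_zero 2 hc0)]
        have h1 : val (a * d - b * c) = val y * ((val c) ^ 2 * (val ϖ)⁻¹) := by
          rw [hdet, _root_.map_mul, hdetk]
        rw [_root_.map_mul, h1, mul_comm (val ϖ), mul_assoc, mul_assoc,
          inv_mul_cancel₀ hϖ0, mul_one]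
      · constructor
        · intro hmem
          obtain ⟨hlt2, -, -⟩ := (mem_ZK0_Qg hmem).row_val hϖ
          rw [hc10, hd11] at hlt2
          exact absurd hlt2 hncd
        · intro hlt2
          exact absurd hlt2 hncd
end
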